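/- arXiv:2209.12112 — 2 statements merged into one kernel-verified Lean document; each statement's English description precedes it below -/
import Mathlib

section
/- Let F be a continuous CDF on [0, x̄] and F̂ a CDF on [0, x̄] with sup_x | F̂(x) − F(x) | ≤ Δ. Let p* ∈ ℝ^n satisfy p*_i > 0 for all i and Σ_i p*_i = 1, and suppose λ̂, λ* ∈ ℝ^n satisfy p_j( F̂ ⊗ … ⊗ F̂, λ̂ ) = p*_j for all j and p_j( F ⊗ … ⊗ F, λ* ) = p*_j for all j. Let X_1, …, X_m be i.i.d. random vectors with distribution F ⊗ … ⊗ F on [0, x̄]^n. Then for each i and each δ ∈ (0,1), with probability at least 1 − δ, m · E[ X_i · 1{X ∈ L_i(λ*)} ] − Σ_{t=1}^m X_{t,i} · 1{ X_t ∈ L_i(λ̂) } ≤ n Δ x̄ m + x̄ √( (m/2) · log(2/δ) ), where X ∼ F ⊗ … ⊗ F. -/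
open MeasureTheory ProbabilityTheory Real

noncomputable section

/-- CDF of a measure on `ℝ`. -/
def mcdf (μ : Measure ℝ) (x : ℝ) : ℝ := (μ (Set.Iic x)).toReal

/-- The Laguerre cell `L_i(λ) = {x ∈ [0,x̄]^n : x_i + λ_i > x_j + λ_j ∀ j ≠ i}`. -/
def laguerre {n : ℕ} (xbar : ℝ) (lam : Fin n → ℝ) (i : Fin n) : Set (Fin n → ℝ) :=
  {x | (∀ j, x j ∈ Set.Icc (0 : ℝ) xbar) ∧ ∀ j, j ≠ i → x j + lam j < x i + lam i}

namespace SER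

set_option linter.unusedSectionVars false


set_option linter.unusedSectionVars false

variable {xbar Δ : ℝ} {Fm Fhat : Measure ℝ} [IsProbabilityMeasure Fm] [IsProbabilityMeasure Fhat]

lemma delta_nonneg (hclose : ∀ x, |mcdf Fhat x - mcdf Fm x| ≤ Δ) : 0 ≤ Δ :=
  le_trans (abs_nonneg _) (hclose 0)

lemma Iic_eq_ofReal (μ : Measure ℝ) [IsProbabilityMeasure μ] (x : ℝ) :
    μ (Set.Iic x) = ENNReal.ofReal (mcdf μ x) := (ENNReal.ofReal_toReal (measure_ne_top μ _)).symm

lemma mcdf_le_one (μ : Measure ℝ) [IsProbabilityMeasure μ] (x : ℝ) : mcdf μ x ≤ 1 := by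
  rw [mcdf, ← ENNReal.toReal_one]
  exact ENNReal.toReal_mono ENNReal.one_ne_top prob_le_one

lemma Fm_atom_zero (hFcont : Continuous (mcdf Fm)) (a : ℝ) : Fm {a} = 0 := by
  by_contra h
  set ε := (Fm {a}).toReal with hε
  have hεpos : 0 < ε := ENNReal.toReal_pos h (measure_ne_top _ _)
  obtain ⟨δ', hδ'pos, hδ'⟩ := Metric.continuous_iff.mp hFcont a (ε/2) (by positivity)
  have hlt : dist (a - δ'/2) a < δ' := by
    rw [Real.dist_eq, abs_sub_lt_iff]; constructor <;> nlinarith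
  have hkey := hδ' (a - δ'/2) hlt
  have hsub : ({a} : Set ℝ) ⊆ Set.Ioc (a - δ'/2) a := by
    intro x hx; rw [Set.mem_singleton_iff] at hx; subst hx
    exact ⟨by linarith, le_rfl⟩
  have h1 : Fm (Set.Iic (a - δ'/2)) + Fm (Set.Ioc (a - δ'/2) a) = Fm (Set.Iic a) := by
    rw [← measure_union (Set.Iic_disjoint_Ioc le_rfl) measurableSet_Ioc, Set.Iic_union_Ioc_eq_Iic]
    linarith
  have h2 : Fm {a} ≤ Fm (Set.Ioc (a - δ'/2) a) := measure_mono hsub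
  have h3 : mcdf Fm (a - δ'/2) + (Fm (Set.Ioc (a - δ'/2) a)).toReal = mcdf Fm a := by
    rw [mcdf, mcdf, ← ENNReal.toReal_add (measure_ne_top _ _) (measure_ne_top _ _), h1]
  have h4 : ε ≤ (Fm (Set.Ioc (a - δ'/2) a)).toReal :=
    ENNReal.toReal_mono (measure_ne_top _ _) h2
  rw [Real.dist_eq, abs_sub_lt_iff] at hkey
  linarith [hkey.2]

lemma compl_null {μ : Measure ℝ} [IsProbabilityMeasure μ]
    (hsupp : μ (Set.Icc (0:ℝ) xbar) = 1) : μ ((Set.Icc (0:ℝ) xbar)ᶜ) = 0 := by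
  have := measure_compl (measurableSet_Icc (a := (0:ℝ)) (b := xbar)) (measure_ne_top μ _)
  rw [hsupp, measure_univ] at this
  simp [this]

/-- key 1-d lemma: `Fm C ≤ Fhat C + Δ` for upper or lower sets `C`. -/
lemma slice_le' (hFcont : Continuous (mcdf Fm))
    (hclose : ∀ x, |mcdf Fhat x - mcdf Fm x| ≤ Δ)
    (C : Set ℝ) (hC : IsUpperSet C ∨ IsLowerSet C) :
    Fm C ≤ Fhat C + ENNReal.ofReal Δ := by
  have hΔ : 0 ≤ Δ := delta_nonneg hclose
  rcases Set.eq_empty_or_nonempty C with rfl | hne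
  · simp
  rcases hC with hC | hC
  · -- upper set
    by_cases hbdd : BddBelow C
    · set a := sInf C with ha
      have hsub1 : C ⊆ Set.Ici a := fun c hc => csInf_le hbdd hc
      have hsub2 : Set.Ioi a ⊆ C := by
        intro x hx
        obtain ⟨c, hcC, hca⟩ := (csInf_lt_iff hbdd hne).mp hx
        exact hC hca.le hcC
      have h1 : Fm C ≤ Fm (Set.Ioi a) := by
        refine le_trans (measure_mono hsub1) ?_
        have : Set.Ici a ⊆ {a} ∪ Set.Ioi a := by
          intro x hx; rcases eq_or_lt_of_le (Set.mem_Ici.mp hx) with h | h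
          · exact Or.inl (by simp [← h])
          · exact Or.inr h
        calc Fm (Set.Ici a) ≤ Fm {a} + Fm (Set.Ioi a) :=
              le_trans (measure_mono this) (measure_union_le _ _)
          _ = Fm (Set.Ioi a) := by rw [Fm_atom_zero hFcont]; simp
      have h2 : Fhat (Set.Ioi a) ≤ Fhat C := measure_mono hsub2
      refine le_trans h1 (le_trans ?_ (add_le_add_left h2 _))
      rw [← Set.compl_Iic, measure_compl measurableSet_Iic (measure_ne_top _ _),
        measure_compl measurableSet_Iic (measure_ne_top _ _), measure_univ, measure_univ,
        Iic_eq_ofReal Fm, Iic_eq_ofReal Fhat, ← ENNReal.ofReal_one,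
        ← ENNReal.ofReal_sub 1 (show (0:ℝ) ≤ mcdf Fm a from ENNReal.toReal_nonneg),
        ← ENNReal.ofReal_sub 1 (show (0:ℝ) ≤ mcdf Fhat a from ENNReal.toReal_nonneg),
        ← ENNReal.ofReal_add (by linarith [mcdf_le_one Fhat a]) hΔ]
      apply ENNReal.ofReal_le_ofReal
      have := (abs_le.mp (hclose a)).2
      linarith
    · -- not bounded below: C = univ
      have hCuniv : C = Set.univ := by
        rw [Set.eq_univ_iff_forall]
        intro x
        obtain ⟨c, hcC, hcx⟩ := (not_bddBelow_iff).mp hbdd x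
        exact hC hcx.le hcC
      subst hCuniv; simpa using le_self_add
  · -- lower set
    by_cases hbdd : BddAbove C
    · set b := sSup C with hb
      have hsub1 : C ⊆ Set.Iic b := fun c hc => le_csSup hbdd hc
      have hsub2 : Set.Iio b ⊆ C := by
        intro x hx
        obtain ⟨c, hcC, hcx⟩ := (lt_csSup_iff hbdd hne).mp hx
        exact hC hcx.le hcC
      have h1 : Fm C ≤ ENNReal.ofReal (mcdf Fm b) := by
        rw [← Iic_eq_ofReal]; exact measure_mono hsub1
      have h2 : Fhat (Set.Iio b) ≤ Fhat C := measure_mono hsub2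
      refine le_trans h1 (le_trans ?_ (add_le_add_left h2 _))
      -- mcdf Fm b ≤ (Fhat (Iio b)).toReal + Δ
      have hreal : mcdf Fm b ≤ (Fhat (Set.Iio b)).toReal + Δ := by
        have htend : Filter.Tendsto (mcdf Fm) (nhdsWithin b (Set.Iio b)) (nhds (mcdf Fm b)) :=
          (hFcont.tendsto b).mono_left nhdsWithin_le_nhds
        refine le_of_tendsto htend ?_
        filter_upwards [self_mem_nhdsWithin] with t ht
        have h3 : mcdf Fhat t ≤ (Fhat (Set.Iio b)).toReal :=
          ENNReal.toReal_mono (measure_ne_top _ _) (measure_mono (Set.Iic_subset_Iio.mpr ht))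
        have := (abs_le.mp (hclose t)).1
        linarith
      calc ENNReal.ofReal (mcdf Fm b) ≤ ENNReal.ofReal ((Fhat (Set.Iio b)).toReal + Δ) :=
            ENNReal.ofReal_le_ofReal hreal
        _ = Fhat (Set.Iio b) + ENNReal.ofReal Δ := by
            rw [ENNReal.ofReal_add ENNReal.toReal_nonneg hΔ, ENNReal.ofReal_toReal (measure_ne_top _ _)]
    · have hCuniv : C = Set.univ := by
        rw [Set.eq_univ_iff_forall]
        intro x
        obtain ⟨c, hcC, hcx⟩ := (not_bddAbove_iff).mp hbdd x
        exact hC hcx.le hcC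
      subst hCuniv; simpa using le_self_add

/-- boxed version -/
lemma slice_le (hFcont : Continuous (mcdf Fm))
    (hclose : ∀ x, |mcdf Fhat x - mcdf Fm x| ≤ Δ)
    (hFhatsupp : Fhat (Set.Icc (0:ℝ) xbar) = 1)
    (C : Set ℝ) (hC : IsUpperSet C ∨ IsLowerSet C) :
    Fm (Set.Icc 0 xbar ∩ C) ≤ Fhat (Set.Icc 0 xbar ∩ C) + ENNReal.ofReal Δ := by
  have h1 : Fm (Set.Icc 0 xbar ∩ C) ≤ Fm C := measure_mono Set.inter_subset_right
  have h2 : Fhat C ≤ Fhat (Set.Icc 0 xbar ∩ C) := by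
    have hsub : C ⊆ (Set.Icc 0 xbar ∩ C) ∪ (Set.Icc (0:ℝ) xbar)ᶜ := by
      intro x hx
      by_cases hmem : x ∈ Set.Icc (0:ℝ) xbar
      · exact Or.inl ⟨hmem, hx⟩
      · exact Or.inr hmem
    calc Fhat C ≤ Fhat (Set.Icc 0 xbar ∩ C) + Fhat ((Set.Icc (0:ℝ) xbar)ᶜ) :=
          le_trans (measure_mono hsub) (measure_union_le _ _)
      _ = Fhat (Set.Icc 0 xbar ∩ C) := by rw [compl_null hFhatsupp]; simp
  exact le_trans h1 (le_trans (slice_le' hFcont hclose C hC) (add_le_add_left h2 _))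



variable {n : ℕ} {xbar : ℝ}

def box (n : ℕ) (xbar : ℝ) : Set (Fin n → ℝ) := {x | ∀ j, x j ∈ Set.Icc (0:ℝ) xbar}

def Ucell (xbar : ℝ) (lam : Fin n → ℝ) (S : Finset (Fin n)) : Set (Fin n → ℝ) :=
  {x | (∀ j, x j ∈ Set.Icc (0:ℝ) xbar) ∧ ∃ j ∈ S, ∀ k, k ∉ S → x k + lam k < x j + lam j}

def Wset (xbar : ℝ) (lam : Fin n → ℝ) : Set (Fin n → ℝ) :=
  box n xbar \ ⋃ j, laguerre xbar lam j

lemma measurableSet_box : MeasurableSet (box n xbar) := by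
  have : box n xbar = ⋂ j, (fun x : Fin n → ℝ => x j) ⁻¹' Set.Icc 0 xbar := by
    ext x; simp [box]
  rw [this]
  exact MeasurableSet.iInter fun j => (measurable_pi_apply j) measurableSet_Icc

lemma measurableSet_lt' (lam : Fin n → ℝ) (k j : Fin n) :
    MeasurableSet {x : Fin n → ℝ | x k + lam k < x j + lam j} :=
  measurableSet_lt ((measurable_pi_apply k).add_const _) ((measurable_pi_apply j).add_const _)

lemma measurableSet_laguerre (lam : Fin n → ℝ) (i : Fin n) :
    MeasurableSet (laguerre xbar lam i) := by
  have : laguerre xbar lam i = box n xbar ∩ ⋂ j, ⋂ (_ : j ≠ i), {x | x j + lam j < x i + lam i} := by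
    ext x; simp [laguerre, box, Set.mem_iInter]
  rw [this]
  exact measurableSet_box.inter (MeasurableSet.iInter fun j => MeasurableSet.iInter fun _ =>
    measurableSet_lt' lam j i)

lemma measurableSet_Ucell (lam : Fin n → ℝ) (S : Finset (Fin n)) :
    MeasurableSet (Ucell xbar lam S) := by
  have : Ucell xbar lam S = box n xbar ∩
      ⋃ j ∈ S, ⋂ k, ⋂ (_ : k ∉ S), {x | x k + lam k < x j + lam j} := by
    ext x; simp [Ucell, box, Set.mem_iUnion, Set.mem_iInter]
  rw [this]
  exact measurableSet_box.inter (MeasurableSet.biUnion S.countable_toSet fun j _ =>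
    MeasurableSet.iInter fun k => MeasurableSet.iInter fun _ => measurableSet_lt' lam k j)

lemma measurableSet_Wset (lam : Fin n → ℝ) : MeasurableSet (Wset xbar lam) :=
  measurableSet_box.diff (MeasurableSet.iUnion fun j => measurableSet_laguerre lam j)

lemma laguerre_disjoint (lam : Fin n → ℝ) : Pairwise (Function.onFun Disjoint (laguerre xbar lam)) := by
  intro j k hjk
  rw [Function.onFun, Set.disjoint_left]
  rintro x ⟨_, hx⟩ ⟨_, hy⟩
  exact absurd (hx k (Ne.symm hjk)) (not_lt.mpr (hy j hjk).le)

lemma laguerre_subset_box (lam : Fin n → ℝ) (i : Fin n) : laguerre xbar lam i ⊆ box n xbar :=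
  fun _ hx => hx.1

lemma laguerre_subset_Ucell (lam : Fin n → ℝ) {S : Finset (Fin n)} {j : Fin n} (hj : j ∈ S) :
    laguerre xbar lam j ⊆ Ucell xbar lam S := by
  rintro x ⟨hbox, hwin⟩
  exact ⟨hbox, j, hj, fun k hk => hwin k (fun h => hk (h ▸ hj))⟩

lemma Ucell_subset (lam : Fin n → ℝ) (S : Finset (Fin n)) :
    Ucell xbar lam S ⊆ (⋃ j ∈ S, laguerre xbar lam j) ∪ Wset xbar lam := by
  rintro x ⟨hbox, j, hjS, hwit⟩
  by_cases hW : x ∈ ⋃ j, laguerre xbar lam j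
  · obtain ⟨k, hk⟩ := Set.mem_iUnion.mp hW
    have hkS : k ∈ S := by
      by_contra hkn
      have h1 := hwit k hkn
      have hkj : j ≠ k := fun h => hkn (h ▸ hjS)
      exact absurd (hk.2 j hkj) (not_lt.mpr h1.le)
    exact Or.inl (Set.mem_biUnion hkS hk)
  · exact Or.inr ⟨hbox, hW⟩

lemma Ucell_mono (lamstar lamhat : Fin n → ℝ) (S : Finset (Fin n))
    (hd : ∀ j ∈ S, ∀ k ∉ S, lamhat k - lamstar k ≤ lamhat j - lamstar j) :
    Ucell xbar lamstar S ⊆ Ucell xbar lamhat S := by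
  rintro x ⟨hbox, j0, hj0S, hwit⟩
  obtain ⟨j1, hj1S, hj1max⟩ := Finset.exists_max_image S (fun j => x j + lamhat j) ⟨j0, hj0S⟩
  refine ⟨hbox, j1, hj1S, fun k hk => ?_⟩
  have h1 : x k + lamstar k < x j0 + lamstar j0 := hwit k hk
  have h2 : lamhat k - lamstar k ≤ lamhat j0 - lamstar j0 := hd j0 hj0S k hk
  have h3 : x k + lamhat k < x j0 + lamhat j0 := by linarith
  exact lt_of_lt_of_le h3 (hj1max j0 hj0S)

/-- The key inclusion. -/
lemma key_inclusion (lamstar lamhat : Fin n → ℝ) (i : Fin n)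
    (S : Finset (Fin n))
    (hS : S = Finset.univ.filter
      (fun j => j ≠ i ∧ lamhat i - lamstar i ≤ lamhat j - lamstar j)) :
    laguerre xbar lamstar i \ laguerre xbar lamhat i ⊆
      (Ucell xbar lamhat S \ Ucell xbar lamstar S) ∪ Wset xbar lamhat := by
  rintro x ⟨⟨hbox, hwin⟩, hnot⟩
  by_cases hW : x ∈ ⋃ j, laguerre xbar lamhat j
  · obtain ⟨k, hk⟩ := Set.mem_iUnion.mp hW
    have hki : k ≠ i := fun h => hnot (h ▸ hk)
    -- k ∈ S
    have hkS : k ∈ S := by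
      rw [hS, Finset.mem_filter]
      refine ⟨Finset.mem_univ _, hki, ?_⟩
      by_contra hlt
      push_neg at hlt
      have h1 : x i + lamhat i < x k + lamhat k := hk.2 i (Ne.symm hki)
      have h2 : x k + lamstar k < x i + lamstar i := hwin k hki
      linarith
    refine Or.inl ⟨⟨hbox, k, hkS, fun k' hk' => hk.2 k' (fun h => hk' (h ▸ hkS))⟩, ?_⟩
    -- x ∉ Ucell lamstar S
    rintro ⟨-, j, hjS, hwit⟩
    have hiS : i ∉ S := by rw [hS]; simp
    have := hwit i hiS
    have hji : j ≠ i := by rw [hS, Finset.mem_filter] at hjS; exact hjS.2.1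
    exact absurd (hwin j hji) (not_lt.mpr this.le)
  · exact Or.inr ⟨hbox, hW⟩

lemma hS_prop (lamstar lamhat : Fin n → ℝ) (i : Fin n) :
    ∀ j ∈ Finset.univ.filter
      (fun j => j ≠ i ∧ lamhat i - lamstar i ≤ lamhat j - lamstar j),
      ∀ k ∉ Finset.univ.filter
      (fun j => j ≠ i ∧ lamhat i - lamstar i ≤ lamhat j - lamstar j),
      lamhat k - lamstar k ≤ lamhat j - lamstar j := by
  intro j hj k hk
  rw [Finset.mem_filter] at hj hk
  push_neg at hk
  rcases eq_or_ne k i with rfl | hki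
  · exact hj.2.2
  · have := hk (Finset.mem_univ k) hki
    linarith [hj.2.2]

lemma Wset_subset_ties (lam : Fin n → ℝ) [NeZero n] :
    Wset xbar lam ⊆ ⋃ (j) (k) (_ : j ≠ k), {x : Fin n → ℝ | x j + lam j = x k + lam k} := by
  rintro x ⟨hbox, hnot⟩
  obtain ⟨j0, -, hj0max⟩ := Finset.exists_max_image Finset.univ (fun j => x j + lam j)
    ⟨⟨0, Nat.pos_of_ne_zero (NeZero.ne n)⟩, Finset.mem_univ _⟩
  have : x ∉ laguerre xbar lam j0 := fun h => hnot (Set.mem_iUnion.mpr ⟨j0, h⟩)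
  have hex : ∃ k, k ≠ j0 ∧ ¬(x k + lam k < x j0 + lam j0) := by
    by_contra hc
    push_neg at hc
    exact this ⟨hbox, fun k hk => hc k hk⟩
  obtain ⟨k, hkj, hkge⟩ := hex
  have heq : x k + lam k = x j0 + lam j0 := le_antisymm (hj0max k (Finset.mem_univ _)) (not_lt.mp hkge)
  exact Set.mem_iUnion.mpr ⟨k, Set.mem_iUnion.mpr ⟨j0, Set.mem_iUnion.mpr ⟨hkj, heq⟩⟩⟩



lemma update_insertNth {N : ℕ} (K : Fin (N+1)) (c t : ℝ) (y : Fin N → ℝ) :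
    Function.update (Fin.insertNth (α := fun _ => ℝ) K c y) K t =
      Fin.insertNth (α := fun _ => ℝ) K t y := by
  funext z
  rcases eq_or_ne z K with rfl | hz
  · rw [Function.update_self, Fin.insertNth_apply_same]
  · obtain ⟨d, hd⟩ := Fin.exists_succAbove_eq hz
    rw [Function.update_of_ne hz, ← hd, Fin.insertNth_apply_succAbove,
      Fin.insertNth_apply_succAbove]

/-- One-coordinate decomposition of a product measure as an iterated integral with the
distinguished coordinate innermost. -/
lemma pi_apply_slice {N : ℕ} (μs : Fin (N+1) → Measure ℝ)
    [∀ j, IsProbabilityMeasure (μs j)] (K : Fin (N+1))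
    {A : Set (Fin (N+1) → ℝ)} (hA : MeasurableSet A) :
    Measure.pi μs A =
      ∫⁻ y, (μs K) {t | Function.update (Fin.insertNth (α := fun _ => ℝ) K 0 y) K t ∈ A}
        ∂(Measure.pi fun j => μs (K.succAbove j)) := by
  have mp := measurePreserving_piFinSuccAbove μs K
  have hs : MeasurableSet
      ((MeasurableEquiv.piFinSuccAbove (fun _ : Fin (N+1) => ℝ) K).symm ⁻¹' A) :=
    (MeasurableEquiv.piFinSuccAbove (fun _ : Fin (N+1) => ℝ) K).symm.measurable hA
  have h1 := mp.measure_preimage hs.nullMeasurableSet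
  have h0 : (⇑(MeasurableEquiv.piFinSuccAbove (fun _ : Fin (N+1) => ℝ) K)) ⁻¹'
      ((MeasurableEquiv.piFinSuccAbove (fun _ : Fin (N+1) => ℝ) K).symm ⁻¹' A) = A := by
    ext x; simp
  rw [h0] at h1
  have h2 : ((μs K).prod (Measure.pi fun j => μs (K.succAbove j)))
        ((MeasurableEquiv.piFinSuccAbove (fun _ : Fin (N+1) => ℝ) K).symm ⁻¹' A) =
      ((Measure.pi fun j => μs (K.succAbove j)).prod (μs K))
        (Prod.swap ⁻¹' ((MeasurableEquiv.piFinSuccAbove (fun _ : Fin (N+1) => ℝ) K).symm ⁻¹' A)) := by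
    rw [← Measure.prod_swap, Measure.map_apply measurable_swap hs]
  rw [h1, h2, Measure.prod_apply (measurable_swap hs)]
  refine lintegral_congr fun y => ?_
  congr 1
  ext t
  simp only [Set.mem_preimage, Prod.swap_prod_mk, Set.mem_setOf_eq]
  rw [update_insertNth]
  exact Iff.rfl

/-- Telescoping comparison between two product measures. -/
lemma pi_le_pi_of_sections {N : ℕ} (Fm Fhat : Measure ℝ)
    [IsProbabilityMeasure Fm] [IsProbabilityMeasure Fhat] (Δ : ℝ)
    (A : Set (Fin (N+1) → ℝ)) (hA : MeasurableSet A)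
    (hsec : ∀ (k : Fin (N+1)) (x : Fin (N+1) → ℝ),
      Fm {t | Function.update x k t ∈ A} ≤ Fhat {t | Function.update x k t ∈ A} + ENNReal.ofReal Δ) :
    (Measure.pi fun _ : Fin (N+1) => Fm) A ≤
      (Measure.pi fun _ : Fin (N+1) => Fhat) A + (N+1 : ℕ) * ENNReal.ofReal Δ := by
  set μs : ℕ → (Fin (N+1) → Measure ℝ) := fun m j => if (j : ℕ) < m then Fhat else Fm with hμs
  haveI hinst : ∀ (m : ℕ) (j : Fin (N+1)), IsProbabilityMeasure (μs m j) := by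
    intro m j
    simp only [hμs]
    split <;> infer_instance
  have hstep : ∀ m : ℕ, m < N + 1 →
      Measure.pi (μs m) A ≤ Measure.pi (μs (m+1)) A + ENNReal.ofReal Δ := by
    intro m hm
    set K : Fin (N+1) := ⟨m, hm⟩ with hK
    have hrest : (fun j => μs m (K.succAbove j)) = (fun j => μs (m+1) (K.succAbove j)) := by
      funext j
      have hne : ((K.succAbove j : Fin (N+1)) : ℕ) ≠ m := by
        intro h
        exact Fin.succAbove_ne K j (Fin.ext h)
      simp only [hμs]
      have hiff : ((K.succAbove j : Fin (N+1)) : ℕ) < m ↔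
          ((K.succAbove j : Fin (N+1)) : ℕ) < m + 1 := by omega
      rw [if_congr hiff rfl rfl]
    have hKm : μs m K = Fm := by simp [hμs, hK]
    have hKm1 : μs (m+1) K = Fhat := by simp [hμs, hK]
    rw [pi_apply_slice (μs m) K hA, pi_apply_slice (μs (m+1)) K hA, hKm, hKm1, ← hrest]
    calc ∫⁻ y, Fm {t | Function.update (Fin.insertNth (α := fun _ => ℝ) K 0 y) K t ∈ A}
            ∂(Measure.pi fun j => μs m (K.succAbove j))
        ≤ ∫⁻ y, (Fhat {t | Function.update (Fin.insertNth (α := fun _ => ℝ) K 0 y) K t ∈ A}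
            + ENNReal.ofReal Δ)
            ∂(Measure.pi fun j => μs m (K.succAbove j)) :=
          lintegral_mono fun y => hsec K (Fin.insertNth (α := fun _ => ℝ) K 0 y)
      _ = (∫⁻ y, Fhat {t | Function.update (Fin.insertNth (α := fun _ => ℝ) K 0 y) K t ∈ A}
            ∂(Measure.pi fun j => μs m (K.succAbove j))) + ENNReal.ofReal Δ := by
          rw [lintegral_add_right _ measurable_const, lintegral_const, measure_univ, mul_one]
  have main : ∀ m : ℕ, m ≤ N + 1 →
      (Measure.pi fun _ : Fin (N+1) => Fm) A ≤ Measure.pi (μs m) A + (m : ℕ) * ENNReal.ofReal Δ := by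
    intro m
    induction m with
    | zero =>
      intro _
      have h0 : μs 0 = fun _ => Fm := by funext j; simp [hμs]
      rw [h0]; simp
    | succ m ih =>
      intro hm1
      have hm : m < N + 1 := by omega
      calc (Measure.pi fun _ : Fin (N+1) => Fm) A
          ≤ Measure.pi (μs m) A + (m : ℕ) * ENNReal.ofReal Δ := ih (by omega)
        _ ≤ (Measure.pi (μs (m+1)) A + ENNReal.ofReal Δ) + (m : ℕ) * ENNReal.ofReal Δ :=
            add_le_add_left (hstep m hm) _
        _ = Measure.pi (μs (m+1)) A + ((m : ℕ) + 1 : ℕ) * ENNReal.ofReal Δ := by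
            push_cast
            ring
  have hend : μs (N+1) = fun _ => Fhat := by
    funext j; simp only [hμs]; rw [if_pos j.isLt]
  have hfin := main (N+1) le_rfl
  rw [hend] at hfin
  exact hfin

/-- a tie hyperplane is null for an atomless product factor -/
lemma tie_null {N : ℕ} (Fm : Measure ℝ) [IsProbabilityMeasure Fm]
    (hatom : ∀ a : ℝ, Fm {a} = 0) (lam : Fin (N+1) → ℝ) (j k : Fin (N+1)) (hjk : j ≠ k) :
    (Measure.pi fun _ : Fin (N+1) => Fm) {x | x j + lam j = x k + lam k} = 0 := by
  have hT : MeasurableSet {x : Fin (N+1) → ℝ | x j + lam j = x k + lam k} :=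
    measurableSet_eq_fun ((measurable_pi_apply j).add_const _) ((measurable_pi_apply k).add_const _)
  rw [pi_apply_slice (fun _ => Fm) j hT]
  have hz : ∀ y : Fin N → ℝ,
      Fm {t | Function.update (Fin.insertNth (α := fun _ => ℝ) j 0 y) j t ∈
        {x : Fin (N+1) → ℝ | x j + lam j = x k + lam k}} = 0 := by
    intro y
    obtain ⟨d, hd⟩ := Fin.exists_succAbove_eq (Ne.symm hjk)
    have hsub : {t | Function.update (Fin.insertNth (α := fun _ => ℝ) j 0 y) j t ∈
        {x : Fin (N+1) → ℝ | x j + lam j = x k + lam k}} ⊆ {y d + lam k - lam j} := by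
      intro t ht
      simp only [Set.mem_setOf_eq] at ht
      rw [update_insertNth, Fin.insertNth_apply_same, ← hd, Fin.insertNth_apply_succAbove,
        hd] at ht
      simp only [Set.mem_singleton_iff]
      linarith
    exact measure_mono_null hsub (hatom _)
  simp only [hz]
  simp




/-- coordinate sections of `Ucell` are `Icc ∩ (upper or lower set)`. -/
lemma sec_Ucell (lam : Fin n → ℝ) (S : Finset (Fin n)) (k : Fin n) (x : Fin n → ℝ) :
    ∃ C : Set ℝ, (IsUpperSet C ∨ IsLowerSet C) ∧
      {t | Function.update x k t ∈ Ucell xbar lam S} = Set.Icc 0 xbar ∩ C := by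
  set Q : ℝ → Prop := fun t => ∃ j ∈ S, ∀ k', k' ∉ S →
    Function.update x k t k' + lam k' < Function.update x k t j + lam j with hQ
  refine ⟨{t | (∀ j, j ≠ k → x j ∈ Set.Icc (0:ℝ) xbar) ∧ Q t}, ?_, ?_⟩
  · by_cases hkS : k ∈ S
    · left
      intro t t' htt' ⟨hc, j, hjS, hq⟩
      refine ⟨hc, j, hjS, fun k' hk' => ?_⟩
      have hk'k : k' ≠ k := fun e => hk' (e ▸ hkS)
      have h1 := hq k' hk'
      rw [Function.update_of_ne hk'k] at h1 ⊢
      rcases eq_or_ne j k with rfl | hjk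
      · rw [Function.update_self] at h1 ⊢
        linarith
      · rwa [Function.update_of_ne hjk] at h1 ⊢
    · right
      intro t t' htt' ⟨hc, j, hjS, hq⟩
      refine ⟨hc, j, hjS, fun k' hk' => ?_⟩
      have hjk : j ≠ k := fun e => hkS (e ▸ hjS)
      have h1 := hq k' hk'
      rw [Function.update_of_ne hjk] at h1 ⊢
      rcases eq_or_ne k' k with rfl | hk'k
      · rw [Function.update_self] at h1 ⊢
        linarith
      · rwa [Function.update_of_ne hk'k] at h1 ⊢
  · ext t
    simp only [Set.mem_setOf_eq, Set.mem_inter_iff, Ucell]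
    constructor
    · rintro ⟨hbox, hq⟩
      have ht : t ∈ Set.Icc (0:ℝ) xbar := by
        have := hbox k
        rwa [Function.update_self] at this
      refine ⟨ht, fun j hj => ?_, hq⟩
      have := hbox j
      rwa [Function.update_of_ne hj] at this
    · rintro ⟨ht, hother, hq⟩
      refine ⟨fun j => ?_, hq⟩
      rcases eq_or_ne j k with rfl | hjk
      · rwa [Function.update_self]
      · rw [Function.update_of_ne hjk]
        exact hother j hjk


lemma xbar_nonneg (hFsupp : Fm (Set.Icc (0:ℝ) xbar) = 1) : 0 ≤ xbar := by
  by_contra h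
  push_neg at h
  rw [Set.Icc_eq_empty (by linarith : ¬ (0:ℝ) ≤ xbar)] at hFsupp
  simp at hFsupp

lemma Ucell_compare {N : ℕ} (hFcont : Continuous (mcdf Fm))
    (hclose : ∀ x, |mcdf Fhat x - mcdf Fm x| ≤ Δ)
    (hFhatsupp : Fhat (Set.Icc (0:ℝ) xbar) = 1)
    (lam : Fin (N+1) → ℝ) (S : Finset (Fin (N+1))) :
    (Measure.pi fun _ : Fin (N+1) => Fm) (Ucell xbar lam S) ≤
      (Measure.pi fun _ : Fin (N+1) => Fhat) (Ucell xbar lam S) + (N+1 : ℕ) * ENNReal.ofReal Δ := by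
  refine pi_le_pi_of_sections Fm Fhat Δ _ (measurableSet_Ucell lam S) ?_
  intro k x
  obtain ⟨C, hC, hCeq⟩ := sec_Ucell lam S k x
  rw [hCeq]
  exact slice_le hFcont hclose hFhatsupp C hC

lemma Wset_null_G {N : ℕ} (hFcont : Continuous (mcdf Fm)) (lam : Fin (N+1) → ℝ) :
    (Measure.pi fun _ : Fin (N+1) => Fm) (Wset xbar lam) = 0 := by
  refine measure_mono_null (Wset_subset_ties lam) ?_
  exact measure_iUnion_null fun j => measure_iUnion_null fun k => measure_iUnion_null fun hjk =>
    tie_null Fm (Fm_atom_zero hFcont) lam j k hjk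

lemma box_one {μ : Measure ℝ} [IsProbabilityMeasure μ]
    (hsupp : μ (Set.Icc (0:ℝ) xbar) = 1) :
    (Measure.pi fun _ : Fin n => μ) (box n xbar) = 1 := by
  have hbox : box n xbar = Set.pi Set.univ (fun _ : Fin n => Set.Icc (0:ℝ) xbar) := by
    ext x
    simp only [box, Set.mem_setOf_eq, Set.mem_univ_pi]
  rw [hbox, Measure.pi_pi]
  simp [hsupp]

lemma cells_eq {μ : Measure ℝ} [IsProbabilityMeasure μ] {lam : Fin n → ℝ} {p : Fin n → ℝ}
    (hlam : ∀ j, ((Measure.pi fun _ : Fin n => μ) (laguerre xbar lam j)).toReal = p j) (j : Fin n) :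
    (Measure.pi fun _ : Fin n => μ) (laguerre xbar lam j) = ENNReal.ofReal (p j) := by
  rw [← hlam j, ENNReal.ofReal_toReal (measure_ne_top _ _)]

lemma iUnion_cells {μ : Measure ℝ} [IsProbabilityMeasure μ] {lam : Fin n → ℝ} {p : Fin n → ℝ}
    (hpos : ∀ j, 0 < p j) (hsum : ∑ j, p j = 1)
    (hlam : ∀ j, ((Measure.pi fun _ : Fin n => μ) (laguerre xbar lam j)).toReal = p j) :
    (Measure.pi fun _ : Fin n => μ) (⋃ j, laguerre xbar lam j) = 1 := by
  rw [measure_iUnion (laguerre_disjoint lam) (fun j => measurableSet_laguerre lam j),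
    tsum_fintype]
  calc ∑ j, (Measure.pi fun _ : Fin n => μ) (laguerre xbar lam j)
      = ∑ j, ENNReal.ofReal (p j) := by
        exact Finset.sum_congr rfl fun j _ => cells_eq hlam j
    _ = ENNReal.ofReal (∑ j, p j) := (ENNReal.ofReal_sum_of_nonneg fun j _ => (hpos j).le).symm
    _ = 1 := by rw [hsum, ENNReal.ofReal_one]

lemma Wset_null_hat {μ : Measure ℝ} [IsProbabilityMeasure μ] {lam : Fin n → ℝ} {p : Fin n → ℝ}
    (hsupp : μ (Set.Icc (0:ℝ) xbar) = 1)
    (hpos : ∀ j, 0 < p j) (hsum : ∑ j, p j = 1)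
    (hlam : ∀ j, ((Measure.pi fun _ : Fin n => μ) (laguerre xbar lam j)).toReal = p j) :
    (Measure.pi fun _ : Fin n => μ) (Wset xbar lam) = 0 := by
  rw [Wset, measure_diff (Set.iUnion_subset fun j => laguerre_subset_box lam j)
    ((MeasurableSet.iUnion fun j => measurableSet_laguerre lam j).nullMeasurableSet)
    (measure_ne_top _ _), box_one hsupp, iUnion_cells hpos hsum hlam]
  simp

/-- main deterministic measure bound -/
lemma measure_diff_bound {N : ℕ} (hFcont : Continuous (mcdf Fm))
    (hclose : ∀ x, |mcdf Fhat x - mcdf Fm x| ≤ Δ)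
    (hFhatsupp : Fhat (Set.Icc (0:ℝ) xbar) = 1)
    {pstar : Fin (N+1) → ℝ} (hpos : ∀ j, 0 < pstar j) (hsum : ∑ j, pstar j = 1)
    {lamhat lamstar : Fin (N+1) → ℝ}
    (hlamhat : ∀ j, ((Measure.pi fun _ : Fin (N+1) => Fhat) (laguerre xbar lamhat j)).toReal = pstar j)
    (hlamstar : ∀ j, ((Measure.pi fun _ : Fin (N+1) => Fm) (laguerre xbar lamstar j)).toReal = pstar j)
    (i : Fin (N+1)) :
    (Measure.pi fun _ : Fin (N+1) => Fm)
        (laguerre xbar lamstar i \ laguerre xbar lamhat i) ≤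
      (N+1 : ℕ) * ENNReal.ofReal Δ := by
  set S : Finset (Fin (N+1)) := Finset.univ.filter
    (fun j => j ≠ i ∧ lamhat i - lamstar i ≤ lamhat j - lamstar j) with hSdef
  have hUmono : Ucell xbar lamstar S ⊆ Ucell xbar lamhat S :=
    Ucell_mono lamstar lamhat S (hS_prop lamstar lamhat i)
  have hkey := key_inclusion (xbar := xbar) lamstar lamhat i S hSdef
  have hWnull : (Measure.pi fun _ : Fin (N+1) => Fm) (Wset xbar lamhat) = 0 :=
    Wset_null_G hFcont lamhat
  have hdisjS : (S : Set (Fin (N+1))).PairwiseDisjoint (laguerre xbar lamhat) :=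
    fun a _ b _ hab => laguerre_disjoint lamhat hab
  have hdisjS' : (S : Set (Fin (N+1))).PairwiseDisjoint (laguerre xbar lamstar) :=
    fun a _ b _ hab => laguerre_disjoint lamstar hab
  -- chain of measure inequalities
  have r2 : (Measure.pi fun _ : Fin (N+1) => Fhat) (Ucell xbar lamhat S) ≤
      ∑ j ∈ S, ENNReal.ofReal (pstar j) := by
    calc (Measure.pi fun _ : Fin (N+1) => Fhat) (Ucell xbar lamhat S)
        ≤ (Measure.pi fun _ : Fin (N+1) => Fhat)
            ((⋃ j ∈ S, laguerre xbar lamhat j) ∪ Wset xbar lamhat) :=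
          measure_mono (Ucell_subset lamhat S)
      _ ≤ (Measure.pi fun _ : Fin (N+1) => Fhat) (⋃ j ∈ S, laguerre xbar lamhat j) +
          (Measure.pi fun _ : Fin (N+1) => Fhat) (Wset xbar lamhat) := measure_union_le _ _
      _ = ∑ j ∈ S, ENNReal.ofReal (pstar j) := by
          rw [Wset_null_hat hFhatsupp hpos hsum hlamhat, add_zero,
            measure_biUnion_finset hdisjS (fun j _ => measurableSet_laguerre lamhat j)]
          exact Finset.sum_congr rfl fun j _ => cells_eq hlamhat j
  have r3 : ∑ j ∈ S, ENNReal.ofReal (pstar j) ≤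
      (Measure.pi fun _ : Fin (N+1) => Fm) (Ucell xbar lamstar S) := by
    calc ∑ j ∈ S, ENNReal.ofReal (pstar j)
        = (Measure.pi fun _ : Fin (N+1) => Fm) (⋃ j ∈ S, laguerre xbar lamstar j) := by
          rw [measure_biUnion_finset hdisjS' (fun j _ => measurableSet_laguerre lamstar j)]
          exact (Finset.sum_congr rfl fun j _ => cells_eq hlamstar j).symm
      _ ≤ (Measure.pi fun _ : Fin (N+1) => Fm) (Ucell xbar lamstar S) :=
          measure_mono (Set.iUnion₂_subset fun j hj => laguerre_subset_Ucell lamstar hj)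
  have r1 := Ucell_compare hFcont hclose hFhatsupp lamhat S
  have rchain : (Measure.pi fun _ : Fin (N+1) => Fm) (Ucell xbar lamhat S) ≤
      (N+1 : ℕ) * ENNReal.ofReal Δ +
        (Measure.pi fun _ : Fin (N+1) => Fm) (Ucell xbar lamstar S) := by
    calc (Measure.pi fun _ : Fin (N+1) => Fm) (Ucell xbar lamhat S)
        ≤ (Measure.pi fun _ : Fin (N+1) => Fhat) (Ucell xbar lamhat S) +
            (N+1 : ℕ) * ENNReal.ofReal Δ := r1
      _ ≤ (Measure.pi fun _ : Fin (N+1) => Fm) (Ucell xbar lamstar S) +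
            (N+1 : ℕ) * ENNReal.ofReal Δ := add_le_add_left (le_trans r2 r3) _
      _ = (N+1 : ℕ) * ENNReal.ofReal Δ +
            (Measure.pi fun _ : Fin (N+1) => Fm) (Ucell xbar lamstar S) := add_comm _ _
  calc (Measure.pi fun _ : Fin (N+1) => Fm) (laguerre xbar lamstar i \ laguerre xbar lamhat i)
      ≤ (Measure.pi fun _ : Fin (N+1) => Fm)
          ((Ucell xbar lamhat S \ Ucell xbar lamstar S) ∪ Wset xbar lamhat) :=
        measure_mono hkey
    _ ≤ (Measure.pi fun _ : Fin (N+1) => Fm) (Ucell xbar lamhat S \ Ucell xbar lamstar S) +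
        (Measure.pi fun _ : Fin (N+1) => Fm) (Wset xbar lamhat) := measure_union_le _ _
    _ = (Measure.pi fun _ : Fin (N+1) => Fm) (Ucell xbar lamhat S \ Ucell xbar lamstar S) := by
        rw [hWnull, add_zero]
    _ = (Measure.pi fun _ : Fin (N+1) => Fm) (Ucell xbar lamhat S) -
        (Measure.pi fun _ : Fin (N+1) => Fm) (Ucell xbar lamstar S) :=
        measure_diff hUmono (measurableSet_Ucell lamstar S).nullMeasurableSet (measure_ne_top _ _)
    _ ≤ (N+1 : ℕ) * ENNReal.ofReal Δ := tsub_le_iff_right.mpr rchain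

/-- main deterministic integral bound -/
lemma det_bound {N : ℕ} (hFcont : Continuous (mcdf Fm))
    (hclose : ∀ x, |mcdf Fhat x - mcdf Fm x| ≤ Δ)
    (hFsupp : Fm (Set.Icc (0:ℝ) xbar) = 1)
    (hFhatsupp : Fhat (Set.Icc (0:ℝ) xbar) = 1)
    {pstar : Fin (N+1) → ℝ} (hpos : ∀ j, 0 < pstar j) (hsum : ∑ j, pstar j = 1)
    {lamhat lamstar : Fin (N+1) → ℝ}
    (hlamhat : ∀ j, ((Measure.pi fun _ : Fin (N+1) => Fhat) (laguerre xbar lamhat j)).toReal = pstar j)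
    (hlamstar : ∀ j, ((Measure.pi fun _ : Fin (N+1) => Fm) (laguerre xbar lamstar j)).toReal = pstar j)
    (i : Fin (N+1)) :
    (∫ x in laguerre xbar lamstar i, x i ∂(Measure.pi fun _ : Fin (N+1) => Fm)) ≤
      (∫ x in laguerre xbar lamhat i, x i ∂(Measure.pi fun _ : Fin (N+1) => Fm)) +
        ((N+1 : ℕ) * Δ) * xbar := by
  have hΔ : 0 ≤ Δ := delta_nonneg hclose
  have hxb : 0 ≤ xbar := xbar_nonneg hFsupp
  set G := (Measure.pi fun _ : Fin (N+1) => Fm) with hG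
  set U := laguerre xbar lamstar i with hU
  set V := laguerre xbar lamhat i with hV
  have hUm : MeasurableSet U := measurableSet_laguerre lamstar i
  have hVm : MeasurableSet V := measurableSet_laguerre lamhat i
  have hInt : ∀ (T : Set (Fin (N+1) → ℝ)), MeasurableSet T → T ⊆ box (N+1) xbar →
      IntegrableOn (fun x => x i) T G := by
    intro T hTm hTb
    refine Measure.integrableOn_of_bounded (measure_ne_top _ _)
      (measurable_pi_apply i).aestronglyMeasurable (M := xbar) ?_
    refine (ae_restrict_iff' hTm).mpr (ae_of_all _ fun x hx => ?_)
    have := hTb hx i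
    rw [Real.norm_eq_abs, abs_le]
    exact ⟨by linarith [this.1], this.2⟩
  have hIU : IntegrableOn (fun x => x i) (U ∩ V) G :=
    hInt _ (hUm.inter hVm) (fun x hx => laguerre_subset_box lamstar i hx.1)
  have hIUV : IntegrableOn (fun x => x i) (U \ V) G :=
    hInt _ (hUm.diff hVm) (fun x hx => laguerre_subset_box lamstar i hx.1)
  have hIVU : IntegrableOn (fun x => x i) (V \ U) G :=
    hInt _ (hVm.diff hUm) (fun x hx => laguerre_subset_box lamhat i hx.1)
  have hdecU : (∫ x in U, x i ∂G) = (∫ x in U ∩ V, x i ∂G) + ∫ x in U \ V, x i ∂G := by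
    rw [← setIntegral_union (Set.disjoint_left.mpr fun x hx hx2 => hx2.2 hx.2)
      (hUm.diff hVm) hIU hIUV, Set.inter_union_diff]
  have hdecV : (∫ x in V, x i ∂G) = (∫ x in U ∩ V, x i ∂G) + ∫ x in V \ U, x i ∂G := by
    rw [← setIntegral_union (Set.disjoint_left.mpr fun x hx hx2 => hx2.2 hx.1)
      (hVm.diff hUm) hIU hIVU, Set.inter_comm, Set.inter_union_diff]
  have h2 : (∫ x in U \ V, x i ∂G) ≤ xbar * ((N+1 : ℕ) * Δ) := by
    have hb := norm_setIntegral_le_of_norm_le_const (μ := G) (s := U \ V)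
      (f := fun x => x i) (C := xbar) (measure_lt_top _ _)
      (fun x hx => by
        have := laguerre_subset_box lamstar i hx.1 i
        rw [Real.norm_eq_abs, abs_le]
        exact ⟨by linarith [this.1], this.2⟩)
    have hm : (G (U \ V)).toReal ≤ (N+1 : ℕ) * Δ := by
      have := measure_diff_bound hFcont hclose hFhatsupp hpos hsum hlamhat hlamstar i
      have h3 := ENNReal.toReal_mono (by
          refine ENNReal.mul_ne_top (ENNReal.natCast_ne_top _) ENNReal.ofReal_ne_top) this
      rwa [ENNReal.toReal_mul, ENNReal.toReal_natCast, ENNReal.toReal_ofReal hΔ] at h3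
    calc (∫ x in U \ V, x i ∂G) ≤ ‖∫ x in U \ V, x i ∂G‖ := le_abs_self _
      _ ≤ xbar * (G (U \ V)).toReal := hb
      _ ≤ xbar * ((N+1 : ℕ) * Δ) := by
          exact mul_le_mul_of_nonneg_left hm hxb
  have h3 : 0 ≤ ∫ x in V \ U, x i ∂G :=
    setIntegral_nonneg (hVm.diff hUm) (fun x hx => (laguerre_subset_box lamhat i hx.1 i).1)
  have := hdecU
  rw [hdecV]
  nlinarith [h2, h3, hdecU]


/-- the analytic core of Hoeffding's lemma -/
lemma phi_le (p : ℝ) (hp0 : 0 ≤ p) (hp1 : p ≤ 1) (u : ℝ) :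
    -p*u + Real.log (1 - p + p * Real.exp u) ≤ u^2/8 := by
  rcases eq_or_lt_of_le hp0 with rfl | hp0'
  · simp
    positivity
  rcases eq_or_lt_of_le hp1 with rfl | hp1'
  · simp [Real.log_exp]
    positivity
  have hD : ∀ v : ℝ, 0 < 1 - p + p * Real.exp v := by
    intro v
    nlinarith [Real.exp_pos v]
  set g : ℝ → ℝ := fun v => v/4 + p - p * Real.exp v / (1 - p + p * Real.exp v) with hg
  set ψ : ℝ → ℝ := fun v => v^2/8 - (-p*v + Real.log (1 - p + p * Real.exp v)) with hψ
  have hgd : ∀ v, HasDerivAt g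
      (1/4 - p*(1-p)*Real.exp v/(1 - p + p * Real.exp v)^2) v := by
    intro v
    have h1 : HasDerivAt (fun w : ℝ => p * Real.exp w) (p * Real.exp v) v :=
      (Real.hasDerivAt_exp v).const_mul p
    have h2 : HasDerivAt (fun w : ℝ => 1 - p + p * Real.exp w) (p * Real.exp v) v :=
      h1.const_add (1 - p)
    have h3 : HasDerivAt (fun w : ℝ => p * Real.exp w / (1 - p + p * Real.exp w))
        ((p * Real.exp v * (1 - p + p * Real.exp v) - p * Real.exp v * (p * Real.exp v)) /
          (1 - p + p * Real.exp v)^2) v := h1.div h2 (hD v).ne'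
    have h4 : HasDerivAt (fun w : ℝ => w/4 + p) (1/4) v := by
      simpa using ((hasDerivAt_id v).div_const 4).add_const p
    have h5 := h4.sub h3
    refine h5.congr_deriv ?_
    have := (hD v).ne'
    field_simp
    ring
  have hψd : ∀ v, HasDerivAt ψ (g v) v := by
    intro v
    have h1 : HasDerivAt (fun w : ℝ => p * Real.exp w) (p * Real.exp v) v :=
      (Real.hasDerivAt_exp v).const_mul p
    have h2 : HasDerivAt (fun w : ℝ => 1 - p + p * Real.exp w) (p * Real.exp v) v :=
      h1.const_add (1 - p)
    have h3 : HasDerivAt (fun w : ℝ => Real.log (1 - p + p * Real.exp w))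
        (p * Real.exp v / (1 - p + p * Real.exp v)) v := h2.log (hD v).ne'
    have h4 : HasDerivAt (fun w : ℝ => -p*w) (-p) v := by
      simpa using (hasDerivAt_id v).const_mul (-p)
    have h5 : HasDerivAt (fun w : ℝ => w^2/8) (v/4) v := by
      have := (hasDerivAt_pow 2 v).div_const 8
      refine this.congr_deriv ?_
      ring
    have h6 := h5.sub (h4.add h3)
    refine h6.congr_deriv ?_
    simp only [hg]
    ring
  have hgmono : Monotone g := by
    have hdiff : Differentiable ℝ g := fun v => (hgd v).differentiableAt
    refine monotone_of_deriv_nonneg hdiff ?_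
    intro v
    rw [(hgd v).deriv]
    have h1 : p*(1-p)*Real.exp v/(1 - p + p * Real.exp v)^2 ≤ 1/4 := by
      rw [div_le_iff₀ (pow_pos (hD v) 2)]
      nlinarith [sq_nonneg (1 - p - p * Real.exp v), Real.exp_pos v]
    linarith
  have hg0 : g 0 = 0 := by
    simp only [hg, Real.exp_zero, mul_one]
    have : 1 - p + p = 1 := by ring
    rw [this]
    ring
  have hψ0 : ψ 0 = 0 := by
    simp only [hψ, Real.exp_zero, mul_one]
    have : 1 - p + p = 1 := by ring
    rw [this, Real.log_one]
    ring
  have hψnonneg : 0 ≤ ψ u := by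
    rcases le_or_gt 0 u with hu | hu
    · have hmono : MonotoneOn ψ (Set.Ici 0) := by
        refine monotoneOn_of_deriv_nonneg (convex_Ici 0)
          (Continuous.continuousOn (by
            have : Differentiable ℝ ψ := fun v => (hψd v).differentiableAt
            exact this.continuous)) (fun v _ => (hψd v).differentiableAt.differentiableWithinAt) ?_
        intro v hv
        rw [(hψd v).deriv]
        rw [interior_Ici] at hv
        have := hgmono (le_of_lt hv)
        linarith [hg0 ▸ this]
      have := hmono (Set.self_mem_Ici) (Set.mem_Ici.mpr hu) hu
      linarith [hψ0 ▸ this]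
    · have hmono : AntitoneOn ψ (Set.Iic 0) := by
        refine antitoneOn_of_deriv_nonpos (convex_Iic 0)
          (Continuous.continuousOn (by
            have : Differentiable ℝ ψ := fun v => (hψd v).differentiableAt
            exact this.continuous)) (fun v _ => (hψd v).differentiableAt.differentiableWithinAt) ?_
        intro v hv
        rw [(hψd v).deriv]
        rw [interior_Iic] at hv
        have := hgmono (le_of_lt hv)
        linarith [hg0 ▸ this]
      have := hmono (Set.mem_Iic.mpr hu.le) (Set.self_mem_Iic) hu.le
      linarith [hψ0 ▸ this]
  simp only [hψ] at hψnonneg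
  linarith


/-- Hoeffding's lemma -/
lemma hoeffding_mgf {Ω : Type*} [MeasurableSpace Ω] (μ : Measure Ω) [IsProbabilityMeasure μ]
    (Z : Ω → ℝ) (hZm : Measurable Z) (a b : ℝ) (hab : ∀ ω, Z ω ∈ Set.Icc a b)
    (hmean : ∫ ω, Z ω ∂μ = 0) (t : ℝ) :
    mgf Z μ t ≤ Real.exp (t^2 * (b-a)^2 / 8) := by
  have hZint : Integrable Z μ := by
    refine (integrable_const (max |a| |b|)).mono' hZm.aestronglyMeasurable ?_
    refine ae_of_all _ fun ω => ?_
    rw [Real.norm_eq_abs, abs_le]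
    have h1 := (hab ω).1
    have h2 := (hab ω).2
    constructor
    · calc -(max |a| |b|) ≤ -(|a|) := neg_le_neg (le_max_left _ _)
        _ ≤ a := neg_abs_le a
        _ ≤ Z ω := h1
    · calc Z ω ≤ b := h2
        _ ≤ |b| := le_abs_self b
        _ ≤ max |a| |b| := le_max_right _ _
  have ha0 : a ≤ 0 := by
    have h := integral_mono (integrable_const a) hZint (fun ω => (hab ω).1)
    rwa [hmean, integral_const, probReal_univ, smul_eq_mul, one_mul] at h
  have hb0 : 0 ≤ b := by
    have h := integral_mono hZint (integrable_const b) (fun ω => (hab ω).2)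
    rwa [hmean, integral_const, probReal_univ, smul_eq_mul, one_mul] at h
  rcases eq_or_lt_of_le (ha0.trans hb0) with heq | hab'
  · -- a = b, hence a = b = 0 and Z ≡ 0
    have ha : a = 0 := le_antisymm ha0 (by rw [heq]; exact hb0)
    have hb : b = 0 := by rw [← heq, ha]
    have hZ0 : ∀ ω, Z ω = 0 := fun ω =>
      le_antisymm (by simpa [hb] using (hab ω).2) (by simpa [ha] using (hab ω).1)
    have hone : mgf Z μ t = 1 := by
      simp [mgf, hZ0]
    rw [hone]
    have h0 : (0:ℝ) ≤ t^2 * (b-a)^2/8 := by positivity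
    have := Real.exp_le_exp.mpr h0
    rwa [Real.exp_zero] at this
  · set p := -a/(b-a) with hp
    have hba : 0 < b - a := by linarith
    have hp0 : 0 ≤ p := div_nonneg (by linarith) hba.le
    have hp1 : p ≤ 1 := by
      rw [div_le_one hba]
      linarith
    set u := t * (b - a) with hu
    set c1 := (Real.exp (t*b) - Real.exp (t*a))/(b-a) with hc1
    set c2 := (b*Real.exp (t*a) - a*Real.exp (t*b))/(b-a) with hc2
    have hpt : ∀ ω, Real.exp (t * Z ω) ≤ c1 * Z ω + c2 := by
      intro ω
      have h1 := (hab ω).1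
      have h2 := (hab ω).2
      set z := Z ω with hz
      have hθ : 0 ≤ (b - z)/(b-a) := div_nonneg (by linarith) hba.le
      have hη : 0 ≤ (z - a)/(b-a) := div_nonneg (by linarith) hba.le
      have hsum : (b - z)/(b-a) + (z - a)/(b-a) = 1 := by field_simp; ring
      have hconv := convexOn_exp.2 (Set.mem_univ (t*a)) (Set.mem_univ (t*b)) hθ hη hsum
      have harg : ((b - z)/(b-a)) • (t*a) + ((z - a)/(b-a)) • (t*b) = t * z := by
        simp only [smul_eq_mul]
        field_simp
        ring
      rw [harg] at hconv
      calc Real.exp (t * z) ≤ (b - z)/(b-a) * Real.exp (t*a) + (z - a)/(b-a) * Real.exp (t*b) := by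
            simpa [smul_eq_mul] using hconv
        _ = c1 * z + c2 := by
            simp only [hc1, hc2]
            field_simp
            ring
    have hmgf : mgf Z μ t ≤ c2 := by
      have hint2 : Integrable (fun ω => c1 * Z ω + c2) μ := (hZint.const_mul c1).add (integrable_const c2)
      have hint1 : Integrable (fun ω => Real.exp (t * Z ω)) μ := by
        refine (integrable_const (Real.exp (|t| * (|a| + |b|)))).mono'
          ((measurable_const.mul hZm).exp.aestronglyMeasurable) (ae_of_all _ fun ω => ?_)
        rw [Real.norm_eq_abs, Real.abs_exp]
        have h1 := (hab ω).1
        have h2 := (hab ω).2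
        have : t * Z ω ≤ |t| * (|a| + |b|) := by
          rcases le_or_gt 0 t with ht | ht
          · calc t * Z ω ≤ t * b := by nlinarith
              _ ≤ |t| * (|a| + |b|) := by
                have : t * b ≤ |t| * |b| := le_trans (le_abs_self _) (abs_mul t b).le
                nlinarith [abs_nonneg a, abs_nonneg t]
          · calc t * Z ω ≤ t * a := by nlinarith
              _ ≤ |t| * (|a| + |b|) := by
                have : t * a ≤ |t| * |a| := le_trans (le_abs_self _) (abs_mul t a).le
                nlinarith [abs_nonneg b, abs_nonneg t]
        exact Real.exp_le_exp.mpr this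
      calc mgf Z μ t = ∫ ω, Real.exp (t * Z ω) ∂μ := rfl
        _ ≤ ∫ ω, (c1 * Z ω + c2) ∂μ := integral_mono hint1 hint2 hpt
        _ = c1 * (∫ ω, Z ω ∂μ) + c2 := by
            rw [integral_add (hZint.const_mul c1) (integrable_const c2), MeasureTheory.integral_const_mul,
              integral_const, probReal_univ, smul_eq_mul, one_mul]
        _ = c2 := by rw [hmean]; ring
    have hc2eq : c2 = Real.exp (-p*u + Real.log (1 - p + p * Real.exp u)) := by
      have hD : 0 < 1 - p + p * Real.exp u := by
        rcases eq_or_lt_of_le hp1 with h1 | h1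
        · rw [← h1]; simp only [sub_self, zero_add]
          positivity
        · nlinarith [Real.exp_pos u, mul_nonneg hp0 (Real.exp_pos u).le]
      rw [Real.exp_add, Real.exp_log hD]
      have h1 : -p*u = t*a := by
        simp only [hp, hu]
        field_simp
      rw [h1]
      simp only [hc2, hp, hu]
      rw [show Real.exp (t*a) * (1 - -a/(b-a) + -a/(b-a) * Real.exp (t*(b-a)))
          = Real.exp (t*a) * (1 - -a/(b-a)) + (-a/(b-a)) * (Real.exp (t*a) * Real.exp (t*(b-a))) by ring,
        ← Real.exp_add]
      have : t*a + t*(b-a) = t*b := by ring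
      rw [this]
      field_simp
      ring
    have hfinal : c2 ≤ Real.exp (t^2*(b-a)^2/8) := by
      rw [hc2eq]
      apply Real.exp_le_exp.mpr
      have := phi_le p hp0 hp1 u
      calc -p*u + Real.log (1 - p + p * Real.exp u) ≤ u^2/8 := this
        _ = t^2*(b-a)^2/8 := by rw [hu]; ring
    exact hmgf.trans hfinal


end SER

/-- **Single-epoch regret bound.**  `F` is a continuous CDF on `[0,x̄]` and `F̂` a CDF with
`sup_x |F̂(x) − F(x)| ≤ Δ`.  `λ̂` achieves the target fractions `p*` under `F̂ ⊗ … ⊗ F̂`, and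
`λ*` under `F ⊗ … ⊗ F`.  If `X 1, …, X m` are i.i.d. with law `F ⊗ … ⊗ F`, then for each
agent `i` and `δ ∈ (0,1)`, with probability at least `1 − δ`,
`m E[Xᵢ 1{X ∈ L_i(λ*)}] − ∑_t X_{t,i} 1{X_t ∈ L_i(λ̂)} ≤ n Δ x̄ m + x̄ √((m/2) log(2/δ))`. -/
theorem single_epoch_regret_bound
    {Ω : Type*} [MeasurableSpace Ω] (μ : Measure Ω) [IsProbabilityMeasure μ]
    {n : ℕ} (xbar Δ : ℝ) (m : ℕ)
    (Fm Fhat : Measure ℝ) [IsProbabilityMeasure Fm] [IsProbabilityMeasure Fhat]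
    (hFsupp : Fm (Set.Icc (0 : ℝ) xbar) = 1)
    (hFhatsupp : Fhat (Set.Icc (0 : ℝ) xbar) = 1)
    (hFcont : Continuous (mcdf Fm))
    (hclose : ∀ x, |mcdf Fhat x - mcdf Fm x| ≤ Δ)
    (pstar : Fin n → ℝ) (hpos : ∀ j, 0 < pstar j) (hsum : ∑ j, pstar j = 1)
    (lamhat lamstar : Fin n → ℝ)
    (hlamhat : ∀ j,
      ((Measure.pi fun _ : Fin n => Fhat) (laguerre xbar lamhat j)).toReal = pstar j)
    (hlamstar : ∀ j,
      ((Measure.pi fun _ : Fin n => Fm) (laguerre xbar lamstar j)).toReal = pstar j)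
    (X : Fin m → Ω → Fin n → ℝ) (hXmeas : ∀ t, Measurable (X t))
    (hXindep : iIndepFun X μ)
    (hXlaw : ∀ t, μ.map (X t) = Measure.pi fun _ : Fin n => Fm)
    (i : Fin n) (δ : ℝ) (hδ : δ ∈ Set.Ioo (0 : ℝ) 1) :
    ENNReal.ofReal (1 - δ) ≤
      μ {ω |
        (m : ℝ) * (∫ x in laguerre xbar lamstar i, x i ∂(Measure.pi fun _ : Fin n => Fm)) -
            (∑ t, X t ω i *
              Set.indicator (laguerre xbar lamhat i) (fun _ => (1 : ℝ)) (X t ω)) ≤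
          n * Δ * xbar * m + xbar * Real.sqrt ((m / 2) * Real.log (2 / δ))} := by
  obtain ⟨hδpos, hδlt1⟩ := hδ
  have hΔ : 0 ≤ Δ := SER.delta_nonneg hclose
  have hxb0 : 0 ≤ xbar := SER.xbar_nonneg hFsupp
  -- n = N + 1
  rcases n with _ | N
  · exact i.elim0
  set Gpi := (Measure.pi fun _ : Fin (N+1) => Fm) with hGpi
  set A := ∫ x in laguerre xbar lamstar i, x i ∂Gpi with hA
  set B := ∫ x in laguerre xbar lamhat i, x i ∂Gpi with hB
  have hdet : A ≤ B + ((N+1 : ℕ) * Δ) * xbar :=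
    SER.det_bound hFcont hclose hFsupp hFhatsupp hpos hsum hlamhat hlamstar i
  set g : (Fin (N+1) → ℝ) → ℝ :=
    fun x => x i * Set.indicator (laguerre xbar lamhat i) (fun _ => (1:ℝ)) x with hgdef
  have hgm : Measurable g :=
    (measurable_pi_apply i).mul (measurable_const.indicator (SER.measurableSet_laguerre lamhat i))
  have hgband : ∀ x, g x ∈ Set.Icc 0 xbar := by
    intro x
    by_cases hx : x ∈ laguerre xbar lamhat i
    · have hbox := hx.1 i
      simp only [hgdef, Set.indicator_of_mem hx, mul_one]
      exact hbox
    · simp only [hgdef, Set.indicator_of_notMem hx, mul_zero]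
      exact ⟨le_rfl, hxb0⟩
  have hgint : ∫ x, g x ∂Gpi = B := by
    have hfun : g = Set.indicator (laguerre xbar lamhat i) (fun x => x i) := by
      funext x
      by_cases hx : x ∈ laguerre xbar lamhat i
      · simp [hgdef, Set.indicator_of_mem hx]
      · simp [hgdef, Set.indicator_of_notMem hx]
    rw [hfun, MeasureTheory.integral_indicator (SER.measurableSet_laguerre lamhat i)]
  have hmeanY : ∀ t, ∫ ω, g (X t ω) ∂μ = B := by
    intro t
    rw [← hgint, ← hXlaw t,
      integral_map (hXmeas t).aemeasurable hgm.aestronglyMeasurable]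
  -- the centered variables
  set Z : Fin m → Ω → ℝ := fun t => (fun v => B - g v) ∘ (X t) with hZdef
  have hZmeas : ∀ t, Measurable (Z t) := fun t => (measurable_const.sub hgm).comp (hXmeas t)
  have hZindep : iIndepFun Z μ :=
    hXindep.comp (fun _ v => B - g v) (fun _ => measurable_const.sub hgm)
  have hZicc : ∀ t ω, Z t ω ∈ Set.Icc (B - xbar) B := by
    intro t ω
    have := hgband (X t ω)
    exact ⟨by simp only [hZdef, Function.comp_apply]; linarith [this.2],
      by simp only [hZdef, Function.comp_apply]; linarith [this.1]⟩
  have hgXint : ∀ t, Integrable (fun ω => g (X t ω)) μ := by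
    intro t
    refine (integrable_const xbar).mono' ((hgm.comp (hXmeas t)).aestronglyMeasurable)
      (ae_of_all _ fun ω => ?_)
    have := hgband (X t ω)
    rw [Real.norm_eq_abs, abs_le]
    exact ⟨by linarith [this.1], this.2⟩
  have hZmean : ∀ t, ∫ ω, Z t ω ∂μ = 0 := by
    intro t
    simp only [hZdef, Function.comp_apply]
    rw [integral_sub (integrable_const B) (hgXint t), hmeanY t, integral_const, probReal_univ,
      smul_eq_mul, one_mul, sub_self]
  -- handle m = 0
  by_cases hm0 : m = 0
  · subst hm0
    have huniv : {ω : Ω |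
        (0:ℕ) * A - (∑ t : Fin 0, X t ω i *
          Set.indicator (laguerre xbar lamhat i) (fun _ => (1 : ℝ)) (X t ω)) ≤
        (N+1 : ℕ) * Δ * xbar * (0:ℕ) + xbar * Real.sqrt (((0:ℕ) / 2) * Real.log (2 / δ))}
        = Set.univ := by
      rw [Set.eq_univ_iff_forall]
      intro ω
      simp only [Set.mem_setOf_eq, Finset.univ_eq_empty, Finset.sum_empty, Nat.cast_zero,
        zero_mul, mul_zero, zero_sub, neg_zero, zero_div, zero_add, Real.sqrt_zero, add_zero]
      exact le_rfl
    rw [huniv, measure_univ]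
    exact ENNReal.ofReal_le_one.mpr (by linarith)
  have hmpos : 0 < (m:ℝ) := by exact_mod_cast Nat.pos_of_ne_zero hm0
  have hxbpos : 0 < xbar := by
    rcases eq_or_lt_of_le hxb0 with h | h
    · exfalso
      have h1 := SER.Fm_atom_zero hFcont 0
      rw [← h, Set.Icc_self] at hFsupp
      rw [hFsupp] at h1
      exact one_ne_zero h1
    · exact h
  set L := Real.log (2/δ) with hLdef
  have hL : 0 < L := Real.log_pos (by rw [lt_div_iff₀ hδpos]; linarith)
  set s := xbar * Real.sqrt (((m:ℝ)/2) * L) with hsdef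
  have hs2 : s^2 = xbar^2 * (((m:ℝ)/2) * L) := by
    rw [hsdef, mul_pow, Real.sq_sqrt (by positivity)]
  have hspos : 0 < s := by
    rw [hsdef]
    positivity
  set c := 4*s/((m:ℝ)*xbar^2) with hcdef
  have hcpos : 0 < c := by rw [hcdef]; positivity
  -- Chernoff
  have hintZ : ∀ t, Integrable (fun ω => Real.exp (c * Z t ω)) μ := by
    intro t
    refine (integrable_const (Real.exp (c * B))).mono'
      ((measurable_const.mul (hZmeas t)).exp.aestronglyMeasurable) (ae_of_all _ fun ω => ?_)
    rw [Real.norm_eq_abs, Real.abs_exp]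
    exact Real.exp_le_exp.mpr (mul_le_mul_of_nonneg_left (hZicc t ω).2 hcpos.le)
  have hintW : Integrable (fun ω => Real.exp (c * (∑ t, Z t) ω)) μ :=
    ProbabilityTheory.iIndepFun.integrable_exp_mul_sum hZindep hZmeas (fun t _ => hintZ t)
  have hcher := measure_ge_le_exp_mul_mgf (X := ∑ t, Z t) (μ := μ) (t := c) s hcpos.le hintW
  have hmgfsum : mgf (∑ t, Z t) μ c = ∏ t, mgf (Z t) μ c := hZindep.mgf_sum hZmeas Finset.univ
  have hmgfZ : ∀ t, mgf (Z t) μ c ≤ Real.exp (c^2*xbar^2/8) := by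
    intro t
    have h := SER.hoeffding_mgf μ (Z t) (hZmeas t) (B - xbar) B (hZicc t) (hZmean t) c
    rwa [show B - (B - xbar) = xbar by ring] at h
  have hprod : ∏ t : Fin m, mgf (Z t) μ c ≤ Real.exp (c^2*xbar^2/8)^m := by
    calc ∏ t : Fin m, mgf (Z t) μ c ≤ ∏ _t : Fin m, Real.exp (c^2*xbar^2/8) :=
          Finset.prod_le_prod (fun t _ => mgf_nonneg) (fun t _ => hmgfZ t)
      _ = Real.exp (c^2*xbar^2/8)^m := by
          rw [Finset.prod_const, Finset.card_univ, Fintype.card_fin]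
  have hcs : c * s = 2*L := by
    have h4 : c * s = 4*s^2/((m:ℝ)*xbar^2) := by rw [hcdef]; ring
    rw [h4, hs2]
    field_simp
    ring
  have hcx : (m:ℝ)*(c^2*xbar^2/8) = L := by
    have h4 : (m:ℝ)*(c^2*xbar^2/8) = 2*s^2/((m:ℝ)*xbar^2) := by
      rw [hcdef]
      field_simp
      ring
    rw [h4, hs2]
    field_simp
  have hexpval : Real.exp (-(c*s) + (m:ℝ)*(c^2*xbar^2/8)) = δ/2 := by
    rw [hcs, hcx, show -(2*L) + L = -L by ring, Real.exp_neg, hLdef,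
      Real.exp_log (by positivity), inv_div]
  have htoReal : (μ {ω | s ≤ (∑ t, Z t) ω}).toReal ≤ δ/2 := by
    calc (μ {ω | s ≤ (∑ t, Z t) ω}).toReal
        ≤ Real.exp (-c*s) * mgf (∑ t, Z t) μ c := hcher
      _ ≤ Real.exp (-c*s) * Real.exp (c^2*xbar^2/8)^m := by
          rw [hmgfsum]
          exact mul_le_mul_of_nonneg_left hprod (Real.exp_nonneg _)
      _ = δ/2 := by
          rw [← hexpval, ← Real.exp_nat_mul, ← Real.exp_add]
          congr 1
          ring
  have hWm : Measurable (∑ t, Z t) := by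
    have hfun : (∑ t, Z t) = fun ω => ∑ t, Z t ω := by
      funext ω
      exact Finset.sum_apply _ _ _
    rw [hfun]
    exact Finset.measurable_sum _ (fun t _ => hZmeas t)
  have hbadmeas : MeasurableSet {ω | s ≤ (∑ t, Z t) ω} :=
    measurableSet_le measurable_const hWm
  have hbadle : μ {ω | s ≤ (∑ t, Z t) ω} ≤ ENNReal.ofReal (δ/2) := by
    rw [← ENNReal.ofReal_toReal (measure_ne_top μ _)]
    exact ENNReal.ofReal_le_ofReal htoReal
  -- event inclusion
  have hWsum : ∀ ω, (∑ t, Z t) ω = (m:ℝ)*B - ∑ t, g (X t ω) := by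
    intro ω
    rw [Finset.sum_apply]
    simp only [hZdef, Function.comp_apply]
    rw [Finset.sum_sub_distrib, Finset.sum_const, Finset.card_univ, Fintype.card_fin,
      nsmul_eq_mul]
  have hsub : {ω | s ≤ (∑ t, Z t) ω}ᶜ ⊆ {ω |
      (m : ℝ) * A - (∑ t, X t ω i *
        Set.indicator (laguerre xbar lamhat i) (fun _ => (1 : ℝ)) (X t ω)) ≤
      (N+1 : ℕ) * Δ * xbar * m + xbar * Real.sqrt (((m:ℝ) / 2) * Real.log (2 / δ))} := by
    intro ω hω
    simp only [Set.mem_compl_iff, Set.mem_setOf_eq, not_le] at hω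
    simp only [Set.mem_setOf_eq]
    have hWω := hWsum ω
    have hgY : ∀ t, X t ω i * Set.indicator (laguerre xbar lamhat i)
        (fun _ => (1 : ℝ)) (X t ω) = g (X t ω) := fun t => rfl
    simp only [hgY]
    have h1 : (m:ℝ)*A - (∑ t, g (X t ω)) = (m:ℝ)*(A - B) + (∑ t, Z t) ω := by
      rw [hWω]; ring
    rw [h1]
    have h2 : (m:ℝ)*(A - B) ≤ (m:ℝ)*(((N+1 : ℕ) * Δ) * xbar) :=
      mul_le_mul_of_nonneg_left (by linarith) hmpos.le
    have h3 : (m:ℝ)*(((N+1 : ℕ) * Δ) * xbar) = (N+1 : ℕ) * Δ * xbar * m := by ring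
    calc (m:ℝ)*(A - B) + (∑ t, Z t) ω ≤ (m:ℝ)*(((N+1 : ℕ) * Δ) * xbar) + s := by
          have := hω.le
          linarith
      _ = (N+1 : ℕ) * Δ * xbar * m + xbar * Real.sqrt (((m:ℝ) / 2) * Real.log (2 / δ)) := by
          rw [h3, hsdef, hLdef]
  calc ENNReal.ofReal (1 - δ)
      ≤ 1 - ENNReal.ofReal (δ/2) := by
        refine ENNReal.le_sub_of_add_le_right ENNReal.ofReal_ne_top ?_
        rw [← ENNReal.ofReal_add (by linarith) (by linarith), ← ENNReal.ofReal_one]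
        exact ENNReal.ofReal_le_ofReal (by linarith)
    _ ≤ 1 - μ {ω | s ≤ (∑ t, Z t) ω} := tsub_le_tsub_left hbadle 1
    _ = μ ({ω | s ≤ (∑ t, Z t) ω}ᶜ) := (prob_compl_eq_one_sub hbadmeas).symm
    _ ≤ _ := measure_mono hsub
end
end

section
/- Let G = G^1 ⊗ … ⊗ G^n and F = F^1 ⊗ … ⊗ F^n be product probability distributions on [0, x̄]^n with continuous marginal CDFs, and suppose sup_x |F^i(x) − G^i(x)| ≤ Δ for every i. Let p* ∈ ℝ^n satisfy p*_i > 0 for all i and Σ_i p*_i = 1, and suppose λ, λ* ∈ ℝ^n satisfy p_j(G, λ) = p*_j for all j and p_j(F, λ*) = p*_j for all j. Then for every j, P_{X∼F}( X ∈ L_j(λ*) \\ L_j(λ) ) ≤ nΔ and P_{X∼F}( X ∈ L_j(λ) \\ L_j(λ*) ) ≤ nΔ. -/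
open MeasureTheory ProbabilityTheory Real

noncomputable section

/-- `p_j(𝐅, λ) = P_{X∼𝐅}(X ∈ L_j(λ))`. -/
def pAlloc {n : ℕ} (xbar : ℝ) (μ : Measure (Fin n → ℝ)) (lam : Fin n → ℝ) (j : Fin n) : ℝ :=
  (μ (laguerre xbar lam j)).toReal

section AuxProof
open Set Filter
lemma lower_eq_Iic (μ : Measure ℝ) [IsProbabilityMeasure μ] [NullSingletonClass μ]
    {H : Set ℝ} (hH : IsLowerSet H) (hne : H.Nonempty) (hproper : H ≠ univ) :
    μ H = ENNReal.ofReal (mcdf μ (sSup H)) := by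
  obtain ⟨c, hc⟩ := (ne_univ_iff_exists_notMem H).mp hproper
  have hbdd : BddAbove H := ⟨c, fun t ht => le_of_not_gt fun h => hc (hH h.le ht)⟩
  have hsub1 : Iio (sSup H) ⊆ H := fun t ht => by
    obtain ⟨s, hs, hts⟩ := exists_lt_of_lt_csSup hne ht
    exact hH hts.le hs
  have hsub2 : H ⊆ Iic (sSup H) := fun t ht => le_csSup hbdd ht
  have heq : μ H = μ (Iic (sSup H)) := by
    refine le_antisymm (measure_mono hsub2) ?_
    rw [← measure_congr (Iio_ae_eq_Iic (a := sSup H))]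
    exact measure_mono hsub1
  rw [heq, mcdf, ENNReal.ofReal_toReal (measure_ne_top μ _)]

lemma close_lower {Δ : ℝ} (μ ν : Measure ℝ) [IsProbabilityMeasure μ] [IsProbabilityMeasure ν]
    [NullSingletonClass μ] [NullSingletonClass ν] (hclose : ∀ x, |mcdf μ x - mcdf ν x| ≤ Δ)
    {H : Set ℝ} (hH : IsLowerSet H) : μ H ≤ ν H + ENNReal.ofReal Δ := by
  rcases eq_empty_or_nonempty H with rfl | hne
  · simp
  rcases eq_or_ne H univ with rfl | hproper
  · simp only [measure_univ]
    exact le_add_right le_rfl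
  rw [lower_eq_Iic μ hH hne hproper, lower_eq_Iic ν hH hne hproper]
  calc ENNReal.ofReal (mcdf μ (sSup H)) ≤ ENNReal.ofReal (mcdf ν (sSup H) + Δ) := by
        refine ENNReal.ofReal_le_ofReal ?_
        have := abs_le.mp (hclose (sSup H))
        linarith [this.2]
    _ ≤ _ := ENNReal.ofReal_add_le

lemma IsLowerSet.measurableSet' {H : Set ℝ} (hH : IsLowerSet H) : MeasurableSet H := by
  rcases eq_empty_or_nonempty H with rfl | hne
  · exact MeasurableSet.empty
  rcases eq_or_ne H univ with rfl | hproper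
  · exact MeasurableSet.univ
  obtain ⟨c, hc⟩ := (ne_univ_iff_exists_notMem H).mp hproper
  have hbdd : BddAbove H := ⟨c, fun t ht => le_of_not_gt fun h => hc (hH h.le ht)⟩
  by_cases hb : sSup H ∈ H
  · have : H = Iic (sSup H) :=
      subset_antisymm (fun t ht => le_csSup hbdd ht) (fun t ht => hH ht hb)
    rw [this]; exact measurableSet_Iic
  · have : H = Iio (sSup H) := by
      refine subset_antisymm
        (fun t ht => lt_of_le_of_ne (le_csSup hbdd ht) (fun h => hb (h ▸ ht))) ?_
      intro t ht
      obtain ⟨s, hs, hts⟩ := exists_lt_of_lt_csSup hne ht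
      exact hH hts.le hs
    rw [this]; exact measurableSet_Iio

lemma close_nice {Δ : ℝ} (μ ν : Measure ℝ) [IsProbabilityMeasure μ] [IsProbabilityMeasure ν]
    [NullSingletonClass μ] [NullSingletonClass ν] (hclose : ∀ x, |mcdf μ x - mcdf ν x| ≤ Δ)
    {H : Set ℝ} (hH : IsLowerSet H ∨ IsUpperSet H) : μ H ≤ ν H + ENNReal.ofReal Δ := by
  rcases hH with hH | hH
  · exact close_lower μ ν hclose hH
  · have hcl : IsLowerSet Hᶜ := hH.compl
    have key : ν Hᶜ ≤ μ Hᶜ + ENNReal.ofReal Δ :=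
      close_lower ν μ (fun x => by rw [abs_sub_comm]; exact hclose x) hcl
    have hm : MeasurableSet H := by
      have := hcl.measurableSet'.compl
      rwa [compl_compl] at this
    have h1 : μ H + μ Hᶜ = 1 := prob_add_prob_compl hm
    have h2 : ν H + ν Hᶜ = 1 := prob_add_prob_compl hm
    rw [← ENNReal.add_le_add_iff_right (c := ν H + ENNReal.ofReal Δ) (a := (1 : ENNReal)) ENNReal.one_ne_top]
    calc μ H + 1 = μ H + (ν H + ν Hᶜ) := by rw [h2]
      _ ≤ μ H + (ν H + (μ Hᶜ + ENNReal.ofReal Δ)) := by gcongr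
      _ = ν H + ENNReal.ofReal Δ + (μ H + μ Hᶜ) := by ring
      _ = ν H + ENNReal.ofReal Δ + 1 := by rw [h1]


lemma mcdf_noAtoms (μ : Measure ℝ) [IsProbabilityMeasure μ]
    (h : Continuous (mcdf μ)) : NoAtoms μ := by
  constructor
  intro a
  have hc : ⇑(ProbabilityTheory.cdf μ) = mcdf μ :=
    funext fun x => ProbabilityTheory.cdf_eq_real μ x
  have h0 : μ {a} = (ProbabilityTheory.cdf μ).measure {a} := by
    rw [ProbabilityTheory.measure_cdf]
  rw [h0, StieltjesFunction.measure_singleton]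
  have hl : Function.leftLim (⇑(ProbabilityTheory.cdf μ)) a = ProbabilityTheory.cdf μ a := by
    refine leftLim_eq_of_tendsto ?_
    rw [hc]
    exact (h.tendsto a).mono_left nhdsWithin_le_nhds
  rw [hl, sub_self, ENNReal.ofReal_zero]

-- Fubini for pi measures, single coordinate
lemma pi_apply_fubini {m : ℕ} (μ : Fin (m+1) → Measure ℝ) [∀ j, IsProbabilityMeasure (μ j)]
    (i : Fin (m+1)) (A : Set (Fin (m+1) → ℝ)) (hA : MeasurableSet A) :
    Measure.pi μ A
      = ∫⁻ y, μ i {t | i.insertNth t y ∈ A} ∂(Measure.pi fun j => μ (i.succAbove j)) := by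
  have hmp := measurePreserving_piFinSuccAbove μ i
  set e := MeasurableEquiv.piFinSuccAbove (fun _ => ℝ) i
  have hs : MeasurableSet (e.symm ⁻¹' A) := e.symm.measurable hA
  have h1 : Measure.pi μ A = ((μ i).prod <| Measure.pi fun j => μ (i.succAbove j)) (e.symm ⁻¹' A) := by
    rw [← hmp.map_eq, MeasurableEquiv.map_apply]
    congr 1
    ext x
    simp
  rw [h1, Measure.prod_apply_symm hs]
  exact lintegral_congr fun y => rfl
lemma update_insertNth {m : ℕ} (i : Fin (m+1)) (t a : ℝ) (y : Fin m → ℝ) :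
    Function.update (Fin.insertNth (α := fun _ => ℝ) i a y) i t = Fin.insertNth (α := fun _ => ℝ) i t y := by
  ext j
  rcases eq_or_ne j i with rfl | hj
  · simp
  · obtain ⟨k, rfl⟩ := Fin.exists_succAbove_eq hj
    rw [Function.update_of_ne hj]
    simp

example : True := trivial

lemma sec_bound {n : ℕ} {Δ xbar : ℝ} (μ ν : Fin n → Measure ℝ)
    [∀ j, IsProbabilityMeasure (μ j)] [∀ j, IsProbabilityMeasure (ν j)]
    (i : Fin n) (hagree : ∀ j, j ≠ i → μ j = ν j)
    (hμa : NoAtoms (μ i)) (hνa : NoAtoms (ν i))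
    (hμsupp : μ i (Icc 0 xbar) = 1) (hνsupp : ν i (Icc 0 xbar) = 1)
    (hclose : ∀ x, |mcdf (μ i) x - mcdf (ν i) x| ≤ Δ)
    (A : Set (Fin n → ℝ)) (hA : MeasurableSet A)
    (hnice : ∀ x : Fin n → ℝ, ∃ H E : Set ℝ, E.Countable ∧ (IsLowerSet H ∨ IsUpperSet H) ∧
      ∀ t ∈ Icc (0:ℝ) xbar, t ∉ E → (Function.update x i t ∈ A ↔ t ∈ H)) :
    Measure.pi μ A ≤ Measure.pi ν A + ENNReal.ofReal Δ := by
  haveI : NullSingletonClass (μ i) := hμa; haveI : NullSingletonClass (ν i) := hνa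
  rcases n with _ | m
  · exact i.elim0
  rw [pi_apply_fubini μ i A hA, pi_apply_fubini ν i A hA]
  have hrest : (fun j => μ (i.succAbove j)) = fun j => ν (i.succAbove j) :=
    funext fun j => hagree _ (Fin.succAbove_ne i j)
  rw [hrest]
  have hptwise : ∀ y : Fin m → ℝ,
      μ i {t | i.insertNth t y ∈ A} ≤ ν i {t | i.insertNth t y ∈ A} + ENNReal.ofReal Δ := by
    intro y
    obtain ⟨H, E, hE, hHlu, hiff⟩ := hnice (i.insertNth 0 y)
    have hiff' : ∀ t ∈ Icc (0:ℝ) xbar, t ∉ E → (i.insertNth t y ∈ A ↔ t ∈ H) := by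
      intro t ht htE
      rw [← update_insertNth i t 0 y]
      exact hiff t ht htE
    have hZ : ∀ (κ : Measure ℝ) [IsProbabilityMeasure κ] [NullSingletonClass κ],
        κ (Icc 0 xbar) = 1 → κ {t | i.insertNth t y ∈ A} = κ H := by
      intro κ _ _ hsupp
      have hZ0 : κ (E ∪ (Icc (0:ℝ) xbar)ᶜ) = 0 := by
        refine measure_union_null (hE.measure_zero κ) ?_
        rw [measure_compl measurableSet_Icc (measure_ne_top κ _), hsupp, measure_univ,
          tsub_self]
      refine measure_congr (MeasureTheory.ae_eq_set.mpr ⟨measure_mono_null ?_ hZ0,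
        measure_mono_null ?_ hZ0⟩)
      · intro t ⟨ht1, ht2⟩
        by_cases htE : t ∈ E
        · exact Or.inl htE
        by_cases htI : t ∈ Icc (0:ℝ) xbar
        · exact absurd ((hiff' t htI htE).mp ht1) ht2
        · exact Or.inr htI
      · intro t ⟨ht1, ht2⟩
        by_cases htE : t ∈ E
        · exact Or.inl htE
        by_cases htI : t ∈ Icc (0:ℝ) xbar
        · exact absurd ((hiff' t htI htE).mpr ht1) ht2
        · exact Or.inr htI
    rw [hZ (μ i) hμsupp, hZ (ν i) hνsupp]
    exact close_nice (μ i) (ν i) hclose hHlu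
  calc ∫⁻ y, μ i {t | i.insertNth t y ∈ A} ∂(Measure.pi fun j => ν (i.succAbove j))
      ≤ ∫⁻ y, (ν i {t | i.insertNth t y ∈ A} + ENNReal.ofReal Δ)
          ∂(Measure.pi fun j => ν (i.succAbove j)) := lintegral_mono hptwise
    _ = (∫⁻ y, ν i {t | i.insertNth t y ∈ A} ∂(Measure.pi fun j => ν (i.succAbove j)))
          + ENNReal.ofReal Δ := by
        rw [lintegral_add_right _ measurable_const, lintegral_const, measure_univ, mul_one]

lemma hyb_bound {n : ℕ} {Δ xbar : ℝ} (μ ν : Fin n → Measure ℝ)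
    [∀ j, IsProbabilityMeasure (μ j)] [∀ j, IsProbabilityMeasure (ν j)]
    (hμa : ∀ j, NoAtoms (μ j)) (hνa : ∀ j, NoAtoms (ν j))
    (hμsupp : ∀ j, μ j (Icc 0 xbar) = 1) (hνsupp : ∀ j, ν j (Icc 0 xbar) = 1)
    (hclose : ∀ j x, |mcdf (μ j) x - mcdf (ν j) x| ≤ Δ)
    (A : Set (Fin n → ℝ)) (hA : MeasurableSet A)
    (hnice : ∀ i, ∀ x : Fin n → ℝ, ∃ H E : Set ℝ, E.Countable ∧ (IsLowerSet H ∨ IsUpperSet H) ∧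
      ∀ t ∈ Icc (0:ℝ) xbar, t ∉ E → (Function.update x i t ∈ A ↔ t ∈ H)) :
    Measure.pi μ A ≤ Measure.pi ν A + n * ENNReal.ofReal Δ := by
  classical
  have key : ∀ s : Finset (Fin n),
      Measure.pi (fun j => if j ∈ s then μ j else ν j) A
        ≤ Measure.pi ν A + s.card * ENNReal.ofReal Δ := by
    intro s
    induction s using Finset.induction_on with
    | empty => simp
    | @insert a s ha ih =>
      haveI hK1 : ∀ j, IsProbabilityMeasure ((fun j => if j ∈ insert a s then μ j else ν j) j) :=
        fun j => by dsimp only; split_ifs <;> infer_instance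
      haveI hK0 : ∀ j, IsProbabilityMeasure ((fun j => if j ∈ s then μ j else ν j) j) :=
        fun j => by dsimp only; split_ifs <;> infer_instance
      have step : Measure.pi (fun j => if j ∈ insert a s then μ j else ν j) A
          ≤ Measure.pi (fun j => if j ∈ s then μ j else ν j) A + ENNReal.ofReal Δ := by
        refine sec_bound (xbar := xbar) _ _ a (fun j hj => by
            simp only [Finset.mem_insert, hj, false_or]) ?_ ?_ ?_ ?_ ?_ A hA (hnice a)
        · simp only [Finset.mem_insert, true_or, if_true]
          exact hμa a
        · simp only [ha, if_false]
          exact hνa a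
        · simp only [Finset.mem_insert, true_or, if_true]
          exact hμsupp a
        · simp only [ha, if_false]
          exact hνsupp a
        · simp only [Finset.mem_insert, true_or, if_true, ha, if_false]
          exact hclose a
      calc Measure.pi (fun j => if j ∈ insert a s then μ j else ν j) A
          ≤ Measure.pi (fun j => if j ∈ s then μ j else ν j) A + ENNReal.ofReal Δ := step
        _ ≤ Measure.pi ν A + s.card * ENNReal.ofReal Δ + ENNReal.ofReal Δ := by gcongr
        _ = Measure.pi ν A + (insert a s).card * ENNReal.ofReal Δ := by
            rw [Finset.card_insert_of_notMem ha]
            push_cast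
            ring
  have := key Finset.univ
  simpa [Finset.card_univ] using this


lemma nice_union_cells {n : ℕ} (xbar : ℝ) (l : Fin n → ℝ) (T : Finset (Fin n))
    (i : Fin n) (x : Fin n → ℝ) :
    ∃ H E : Set ℝ, E.Countable ∧ (IsLowerSet H ∨ IsUpperSet H) ∧
      ∀ t ∈ Icc (0:ℝ) xbar, t ∉ E →
        ((Function.update x i t ∈ ⋃ k ∈ T, laguerre xbar l k) ↔ t ∈ H) := by
  classical
  by_cases hx : ∀ j, j ≠ i → x j ∈ Icc (0:ℝ) xbar
  case neg =>
    refine ⟨∅, ∅, countable_empty, Or.inl isLowerSet_empty, ?_⟩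
    push_neg at hx
    obtain ⟨j, hji, hjI⟩ := hx
    intro t ht _
    simp only [mem_empty_iff_false, iff_false]
    intro hmem
    simp only [mem_iUnion, exists_prop] at hmem
    obtain ⟨k, _, hk⟩ := hmem
    exact hjI (by simpa [Function.update_of_ne hji] using hk.1 j)
  case pos =>
  set z : ℝ → (Fin n → ℝ) := fun t => Function.update x i t with hzdef
  have hzi : ∀ t, z t i = t := fun t => Function.update_self i t x
  have hzj : ∀ t j, j ≠ i → z t j = x j := fun t j hj => Function.update_of_ne hj t x
  set Q : ℝ → Prop := fun t => ∃ k ∈ T, ∀ j, j ≠ k → z t j + l j < z t k + l k with hQdef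
  have hmem : ∀ t ∈ Icc (0:ℝ) xbar, ((z t ∈ ⋃ k ∈ T, laguerre xbar l k) ↔ Q t) := by
    intro t ht
    simp only [mem_iUnion, exists_prop, hQdef]
    constructor
    · rintro ⟨k, hkT, hk⟩; exact ⟨k, hkT, hk.2⟩
    · rintro ⟨k, hkT, hk⟩
      refine ⟨k, hkT, ⟨fun j => ?_, hk⟩⟩
      rcases eq_or_ne j i with rfl | hj
      · rw [hzi]; exact ht
      · rw [hzj t j hj]; exact hx j hj
  by_cases hiT : i ∈ T
  · refine ⟨{u | ∃ t0, Q t0 ∧ t0 ≤ u}, Set.range (fun j => x j + l j - l i),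
      (Set.finite_range _).countable, Or.inr ?_, ?_⟩
    · intro u v huv hu
      obtain ⟨t0, hQ0, ht0⟩ := hu
      exact ⟨t0, hQ0, ht0.trans huv⟩
    intro t ht htE
    rw [hmem t ht]
    constructor
    · intro h; exact ⟨t, h, le_rfl⟩
    · rintro ⟨t0, hQ0, ht0⟩
      rcases eq_or_lt_of_le ht0 with rfl | hlt
      · exact hQ0
      obtain ⟨k, hkT, hk⟩ := hQ0
      have htne : ∀ j, t + l i ≠ x j + l j := by
        intro j h
        exact htE ⟨j, by simp only; linarith⟩
      rcases eq_or_ne k i with rfl | hki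
      · refine ⟨k, hkT, fun j hj => ?_⟩
        rw [hzj t j hj, hzi]
        have := hk j hj
        rw [hzj t0 j hj, hzi] at this
        linarith
      · by_cases h2 : t + l i < x k + l k
        · refine ⟨k, hkT, fun j hj => ?_⟩
          rw [hzj t k hki]
          rcases eq_or_ne j i with rfl | hji
          · rw [hzi]; exact h2
          · rw [hzj t j hji]
            have := hk j hj
            rw [hzj t0 j hji, hzj t0 k hki] at this
            exact this
        · have h3 : x k + l k < t + l i :=
            lt_of_le_of_ne (not_lt.mp h2) (Ne.symm (htne k))
          refine ⟨i, hiT, fun j hj => ?_⟩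
          rw [hzi, hzj t j hj]
          rcases eq_or_ne j k with rfl | hjk
          · exact h3
          · have := hk j hjk
            rw [hzj t0 j hj, hzj t0 k hki] at this
            linarith
  · refine ⟨{t | Q t}, ∅, countable_empty, Or.inl ?_, ?_⟩
    · intro u v hvu hQu
      obtain ⟨k, hkT, hk⟩ := hQu
      have hki : k ≠ i := fun h => hiT (h ▸ hkT)
      refine ⟨k, hkT, fun j hj => ?_⟩
      rw [hzj v k hki]
      rcases eq_or_ne j i with rfl | hji
      · rw [hzi]
        have := hk j (Ne.symm hki)
        rw [hzi, hzj u k hki] at this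
        linarith
      · rw [hzj v j hji]
        have := hk j hj
        rw [hzj u j hji, hzj u k hki] at this
        exact this
    intro t ht _
    exact hmem t ht

lemma laguerre_measurable {n : ℕ} (xbar : ℝ) (l : Fin n → ℝ) (k : Fin n) :
    MeasurableSet (laguerre xbar l k) := by
  have heq : laguerre xbar l k =
      (⋂ j, (fun x : Fin n → ℝ => x j) ⁻¹' Icc (0:ℝ) xbar) ∩
      (⋂ j, ⋂ (_ : j ≠ k), {x : Fin n → ℝ | x j + l j < x k + l k}) := by
    ext x
    simp only [laguerre, mem_setOf_eq, mem_inter_iff, mem_iInter, mem_preimage]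
  rw [heq]
  refine (MeasurableSet.iInter fun j => (measurable_pi_apply j) measurableSet_Icc).inter
    (MeasurableSet.iInter fun j => MeasurableSet.iInter fun _ => ?_)
  exact measurableSet_lt ((measurable_pi_apply j).add_const _) ((measurable_pi_apply k).add_const _)

lemma cell_pair {n : ℕ} {xbar : ℝ} {l1 l2 : Fin n → ℝ} {m k : Fin n} (hkm : k ≠ m)
    {x : Fin n → ℝ} (h1 : x ∈ laguerre xbar l1 m) (h2 : x ∈ laguerre xbar l2 k) :
    l1 k - l2 k < l1 m - l2 m := by
  have a := h1.2 k hkm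
  have b := h2.2 m (Ne.symm hkm)
  linarith

lemma laguerre_disjoint {n : ℕ} (xbar : ℝ) (l : Fin n → ℝ) {k k' : Fin n} (h : k ≠ k') :
    Disjoint (laguerre xbar l k) (laguerre xbar l k') := by
  rw [Set.disjoint_left]
  intro x h1 h2
  have a := h1.2 k' (Ne.symm h)
  have b := h2.2 k h
  linarith

lemma tie_null {m : ℕ} (μ : Fin (m+1) → Measure ℝ) [∀ j, IsProbabilityMeasure (μ j)]
    (hμa : ∀ j, NoAtoms (μ j)) {k k' : Fin (m+1)} (h : k' ≠ k) (c : ℝ) :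
    Measure.pi μ {x | x k + c = x k'} = 0 := by
  haveI : NullSingletonClass (μ k) := hμa k
  have hmeas : MeasurableSet {x : Fin (m+1) → ℝ | x k + c = x k'} :=
    measurableSet_eq_fun (by fun_prop : Measurable fun x : Fin (m+1) → ℝ => x k + c) (measurable_pi_apply k')
  rw [pi_apply_fubini μ k _ hmeas]
  obtain ⟨j', hj'⟩ := Fin.exists_succAbove_eq h
  have key : ∀ y : Fin m → ℝ,
      μ k {t | (Fin.insertNth (α := fun _ => ℝ) k t y) k + c
        = (Fin.insertNth (α := fun _ => ℝ) k t y) k'} = 0 := by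
    intro y
    have heq : {t : ℝ | (Fin.insertNth (α := fun _ => ℝ) k t y) k + c
        = (Fin.insertNth (α := fun _ => ℝ) k t y) k'} = {y j' - c} := by
      ext t
      rw [← hj']
      simp only [Fin.insertNth_apply_same, Fin.insertNth_apply_succAbove, mem_setOf_eq,
        mem_singleton_iff]
      constructor <;> intro <;> linarith
    rw [heq]
    exact measure_singleton _
  exact (lintegral_congr fun y => key y).trans lintegral_zero

lemma nocell_null {m : ℕ} (μ : Fin (m+1) → Measure ℝ) [∀ j, IsProbabilityMeasure (μ j)]
    (hμa : ∀ j, NoAtoms (μ j)) (xbar : ℝ) (l : Fin (m+1) → ℝ) :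
    Measure.pi μ {x | (∀ j, x j ∈ Icc (0:ℝ) xbar) ∧ ∀ k, x ∉ laguerre xbar l k} = 0 := by
  refine measure_mono_null (fun x hx => ?_) (measure_iUnion_null fun k =>
    measure_iUnion_null fun k' => measure_iUnion_null fun (h : k' ≠ k) =>
      tie_null μ hμa h (l k - l k'))
  obtain ⟨hcube, hnc⟩ := hx
  obtain ⟨k, -, hmax⟩ := Finset.exists_max_image Finset.univ
    (fun k => x k + l k) Finset.univ_nonempty
  have : ¬ (∀ j, j ≠ k → x j + l j < x k + l k) := fun hlt => hnc k ⟨hcube, hlt⟩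
  push_neg at this
  obtain ⟨j, hjk, hle⟩ := this
  have hje := hmax j (Finset.mem_univ j)
  simp only [mem_iUnion]
  exact ⟨k, j, hjk, by simp only [mem_setOf_eq]; linarith⟩

lemma cancel_lemma {α : Type*} [MeasurableSpace α] (ρ : Measure α) [IsFiniteMeasure ρ]
    {X P Q : Set α} {c : ENNReal} (hQ : MeasurableSet Q)
    (h1 : ρ (X \ P) = 0) (h2 : X ∩ Q = ∅) (h3 : ρ (Q \ P) = 0)
    (h4 : ρ P ≤ ρ Q + c) : ρ X ≤ c := by
  have e1 : ρ X ≤ ρ (P \ Q) := by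
    calc ρ X ≤ ρ (X ∩ P) + ρ (X \ P) := measure_le_inter_add_diff ρ X P
      _ = ρ (X ∩ P) := by rw [h1, add_zero]
      _ ≤ ρ (P \ Q) := measure_mono (fun x hx =>
          ⟨hx.2, fun hq => (eq_empty_iff_forall_notMem.mp h2) x ⟨hx.1, hq⟩⟩)
  have e2 : ρ Q ≤ ρ (P ∩ Q) := by
    calc ρ Q ≤ ρ (Q ∩ P) + ρ (Q \ P) := measure_le_inter_add_diff ρ Q P
      _ = ρ (Q ∩ P) := by rw [h3, add_zero]
      _ ≤ ρ (P ∩ Q) := measure_mono (fun x hx => ⟨hx.2, hx.1⟩)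
  have e3 : ρ (P \ Q) + ρ (P ∩ Q) = ρ P := measure_diff_add_inter P hQ
  rw [← ENNReal.add_le_add_iff_right (measure_ne_top ρ Q)]
  calc ρ X + ρ Q ≤ ρ (P \ Q) + ρ (P ∩ Q) := add_le_add e1 e2
    _ = ρ P := e3
    _ ≤ ρ Q + c := h4
    _ = c + ρ Q := add_comm _ _

end AuxProof

open Set Filter

/-- If `G = G¹ ⊗ … ⊗ Gⁿ` and `F = F¹ ⊗ … ⊗ Fⁿ` are product distributions on `[0,x̄]^n` with
continuous marginal CDFs uniformly within `Δ` of each other, and `λ` (resp. `λ*`) achieves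
the target fractions `p*` under `G` (resp. `F`), then for every `j`, the allocation regions
differ by `F`-probability at most `nΔ` in each direction:
`P_{X∼F}(X ∈ L_j(λ*) \ L_j(λ)) ≤ nΔ` and `P_{X∼F}(X ∈ L_j(λ) \ L_j(λ*)) ≤ nΔ`. -/
theorem allocation_regions_close
    {n : ℕ} (xbar Δ : ℝ) (hxbar : 0 < xbar)
    (Fm Gm : Fin n → Measure ℝ)
    [∀ j, IsProbabilityMeasure (Fm j)] [∀ j, IsProbabilityMeasure (Gm j)]
    (hFsupp : ∀ j, Fm j (Set.Icc (0 : ℝ) xbar) = 1)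
    (hGsupp : ∀ j, Gm j (Set.Icc (0 : ℝ) xbar) = 1)
    (hFcont : ∀ j, Continuous (mcdf (Fm j)))
    (hGcont : ∀ j, Continuous (mcdf (Gm j)))
    (hclose : ∀ j x, |mcdf (Fm j) x - mcdf (Gm j) x| ≤ Δ)
    (pstar : Fin n → ℝ) (hpos : ∀ j, 0 < pstar j) (hsum : ∑ j, pstar j = 1)
    (lam lamstar : Fin n → ℝ)
    (hlam : ∀ j, pAlloc xbar (Measure.pi Gm) lam j = pstar j)
    (hlamstar : ∀ j, pAlloc xbar (Measure.pi Fm) lamstar j = pstar j) :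
    ∀ j, ((Measure.pi Fm) (laguerre xbar lamstar j \ laguerre xbar lam j)).toReal ≤ n * Δ ∧
      ((Measure.pi Fm) (laguerre xbar lam j \ laguerre xbar lamstar j)).toReal ≤ n * Δ := by
  classical
  rcases n with _ | m
  · exact fun j => j.elim0
  intro j
  have hFa : ∀ k, NoAtoms (Fm k) := fun k => mcdf_noAtoms _ (hFcont k)
  have hGa : ∀ k, NoAtoms (Gm k) := fun k => mcdf_noAtoms _ (hGcont k)
  have hΔ : 0 ≤ Δ := le_trans (abs_nonneg _) (hclose j 0)
  set c : ENNReal := (↑(m+1) : ENNReal) * ENNReal.ofReal Δ with hc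
  have hcne : c ≠ ⊤ := ENNReal.mul_ne_top (ENNReal.natCast_ne_top _) ENNReal.ofReal_ne_top
  have hctr : c.toReal = (↑(m+1) : ℝ) * Δ := by
    rw [hc, ENNReal.toReal_mul, ENNReal.toReal_natCast, ENNReal.toReal_ofReal hΔ]
  have conv : ∀ S : Set (Fin (m+1) → ℝ), Measure.pi Fm S ≤ c →
      (Measure.pi Fm S).toReal ≤ (m+1 : ℕ) * Δ := by
    intro S hS
    calc (Measure.pi Fm S).toReal ≤ c.toReal := ENNReal.toReal_mono hcne hS
      _ = _ := hctr
  have hνcell : ∀ k, Measure.pi Fm (laguerre xbar lamstar k)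
      = ENNReal.ofReal (pstar k) := fun k => by
    rw [← hlamstar k, pAlloc, ENNReal.ofReal_toReal (measure_ne_top _ _)]
  have hγcell : ∀ k, Measure.pi Gm (laguerre xbar lam k)
      = ENNReal.ofReal (pstar k) := fun k => by
    rw [← hlam k, pAlloc, ENNReal.ofReal_toReal (measure_ne_top _ _)]
  have hsum_eq : ∀ T : Finset (Fin (m+1)),
      Measure.pi Fm (⋃ k ∈ T, laguerre xbar lamstar k)
        = Measure.pi Gm (⋃ k ∈ T, laguerre xbar lam k) := by
    intro T
    rw [measure_biUnion_finset (fun a _ b _ hab => laguerre_disjoint xbar lamstar hab)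
        (fun k _ => laguerre_measurable xbar lamstar k),
      measure_biUnion_finset (fun a _ b _ hab => laguerre_disjoint xbar lam hab)
        (fun k _ => laguerre_measurable xbar lam k)]
    exact Finset.sum_congr rfl fun k _ => (hνcell k).trans (hγcell k).symm
  have hybF : ∀ (T : Finset (Fin (m+1))) (l : Fin (m+1) → ℝ),
      Measure.pi Fm (⋃ k ∈ T, laguerre xbar l k)
        ≤ Measure.pi Gm (⋃ k ∈ T, laguerre xbar l k) + c :=
    fun T l => hyb_bound Fm Gm hFa hGa hFsupp hGsupp hclose _
      (T.measurableSet_biUnion fun k _ => laguerre_measurable xbar l k)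
      (fun i x => nice_union_cells xbar l T i x)
  have hybG : ∀ (T : Finset (Fin (m+1))) (l : Fin (m+1) → ℝ),
      Measure.pi Gm (⋃ k ∈ T, laguerre xbar l k)
        ≤ Measure.pi Fm (⋃ k ∈ T, laguerre xbar l k) + c :=
    fun T l => hyb_bound Gm Fm hGa hFa hGsupp hFsupp
      (fun k x => by rw [abs_sub_comm]; exact hclose k x) _
      (T.measurableSet_biUnion fun k _ => laguerre_measurable xbar l k)
      (fun i x => nice_union_cells xbar l T i x)
  constructor
  · -- direction 1 : L_j(lamstar) \ L_j(lam)
    set T := Finset.univ.filter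
      (fun k => lam j - lamstar j < lam k - lamstar k) with hT
    have hmemT : ∀ k, k ∈ T ↔ lam j - lamstar j < lam k - lamstar k := by
      intro k; simp [hT]
    refine conv _ (cancel_lemma (Measure.pi Fm)
      (Q := ⋃ k ∈ T, laguerre xbar lamstar k)
      (P := ⋃ k ∈ T, laguerre xbar lam k)
      (T.measurableSet_biUnion fun k _ => laguerre_measurable xbar lamstar k)
      ?_ ?_ ?_ ?_)
    · refine measure_mono_null ?_ (nocell_null Fm hFa xbar lam)
      rintro x ⟨⟨hx1, hx2⟩, hx3⟩
      refine ⟨hx1.1, fun k hk => ?_⟩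
      rcases eq_or_ne k j with rfl | hkj
      · exact hx2 hk
      · have := cell_pair hkj hx1 hk
        exact hx3 (mem_biUnion ((hmemT k).mpr (by linarith)) hk)
    · rw [eq_empty_iff_forall_notMem]
      rintro x ⟨⟨hx1, -⟩, hx2⟩
      rw [mem_iUnion₂] at hx2
      obtain ⟨k, hkT, hk⟩ := hx2
      have hkj : k ≠ j := fun h => by
        rw [h] at hkT; exact absurd ((hmemT j).mp hkT) (lt_irrefl _)
      exact (Set.disjoint_left.mp (laguerre_disjoint xbar lamstar hkj)) hk hx1
    · refine measure_mono_null ?_ (nocell_null Fm hFa xbar lam)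
      rintro x ⟨hx1, hx2⟩
      rw [mem_iUnion₂] at hx1
      obtain ⟨s, hsT, hs⟩ := hx1
      refine ⟨hs.1, fun k hk => ?_⟩
      have hkT : k ∈ T := by
        rcases eq_or_ne k s with rfl | hks
        · exact hsT
        · have h5 := cell_pair hks hs hk
          have hsT' := (hmemT s).mp hsT
          exact (hmemT k).mpr (by linarith)
      exact hx2 (mem_biUnion hkT hk)
    · calc Measure.pi Fm (⋃ k ∈ T, laguerre xbar lam k)
          ≤ Measure.pi Gm (⋃ k ∈ T, laguerre xbar lam k) + c := hybF T lam
        _ = Measure.pi Fm (⋃ k ∈ T, laguerre xbar lamstar k) + c := by rw [hsum_eq T]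
  · -- direction 2 : L_j(lam) \ L_j(lamstar)
    set T := Finset.univ.filter
      (fun k => lam k - lamstar k < lam j - lamstar j) with hT
    have hmemT : ∀ k, k ∈ T ↔ lam k - lamstar k < lam j - lamstar j := by
      intro k; simp [hT]
    refine conv _ (cancel_lemma (Measure.pi Fm)
      (Q := ⋃ k ∈ T, laguerre xbar lam k)
      (P := ⋃ k ∈ T, laguerre xbar lamstar k)
      (T.measurableSet_biUnion fun k _ => laguerre_measurable xbar lam k)
      ?_ ?_ ?_ ?_)
    · refine measure_mono_null ?_ (nocell_null Fm hFa xbar lamstar)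
      rintro x ⟨⟨hx1, hx2⟩, hx3⟩
      refine ⟨hx1.1, fun k hk => ?_⟩
      rcases eq_or_ne k j with rfl | hkj
      · exact hx2 hk
      · have := cell_pair hkj hx1 hk
        exact hx3 (mem_biUnion ((hmemT k).mpr (by linarith)) hk)
    · rw [eq_empty_iff_forall_notMem]
      rintro x ⟨⟨hx1, -⟩, hx2⟩
      rw [mem_iUnion₂] at hx2
      obtain ⟨k, hkT, hk⟩ := hx2
      have hkj : k ≠ j := fun h => by
        rw [h] at hkT; exact absurd ((hmemT j).mp hkT) (lt_irrefl _)
      exact (Set.disjoint_left.mp (laguerre_disjoint xbar lam hkj)) hk hx1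
    · refine measure_mono_null ?_ (nocell_null Fm hFa xbar lamstar)
      rintro x ⟨hx1, hx2⟩
      rw [mem_iUnion₂] at hx1
      obtain ⟨s, hsT, hs⟩ := hx1
      refine ⟨hs.1, fun k hk => ?_⟩
      have hkT : k ∈ T := by
        rcases eq_or_ne k s with rfl | hks
        · exact hsT
        · have h5 := cell_pair hks hs hk
          have hsT' := (hmemT s).mp hsT
          exact (hmemT k).mpr (by linarith)
      exact hx2 (mem_biUnion hkT hk)
    · calc Measure.pi Fm (⋃ k ∈ T, laguerre xbar lamstar k)
          = Measure.pi Gm (⋃ k ∈ T, laguerre xbar lam k) := hsum_eq T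
        _ ≤ Measure.pi Fm (⋃ k ∈ T, laguerre xbar lam k) + c := hybG T lam
end
end
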